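/- arXiv:1005.1151 — 8 statements merged into one kernel-verified Lean document; each statement's English description precedes it below -/
import Mathlib

section
/- If 𝒜 = {x ∈ ℝ^n_+ : Ax = b} is nonempty, then the problem of minimizing Lx over 𝒜 with respect to K has no efficient solutions if and only if ℬ = {(λ, U, v) ∈ K*⁰ × ℝ^{k×m} × ℝ^k : λᵀv = 0, (L − UA)ᵀλ ∈ ℝ^n_+} is empty. -/
open Matrix

variable {E : Type*} [NormedAddCommGroup E] [NormedSpace ℝ E]

/-- The conic hull of a finite family of vectors. -/
def coneOf {ι : Type*} [Fintype ι] (v : ι → E) : Set E :=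
  {x | ∃ c : ι → ℝ, (∀ i, 0 ≤ c i) ∧ x = ∑ i, c i • v i}

/-- Carathéodory-type reduction: any conic combination can be rewritten with a linearly
independent support. -/
lemma coneOf_reduce {ι : Type*} [Fintype ι] [DecidableEq ι] (v : ι → E) (s : Finset ι) :
    ∀ (c : ι → ℝ), (∀ i, 0 ≤ c i) → (∀ i ∉ s, c i = 0) →
    ∃ (s' : Finset ι) (c' : ι → ℝ), LinearIndependent ℝ (fun i : s' => v i) ∧
      (∀ i, 0 ≤ c' i) ∧ (∀ i ∉ s', c' i = 0) ∧ ∑ i, c' i • v i = ∑ i, c i • v i := by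
  classical
  induction s using Finset.strongInduction with
  | _ s ih =>
    intro c hc hcs
    by_cases hli : LinearIndependent ℝ (fun i : s => v i)
    · exact ⟨s, c, hli, hc, hcs, rfl⟩
    · obtain ⟨g, hgsum, i₁, hgi₁⟩ := Fintype.not_linearIndependent_iff.mp hli
      have key : ∀ (b : ι → ℝ), (∀ i ∉ s, b i = 0) → (∑ i, b i • v i = 0) →
          (∃ i, 0 < b i) →
          ∃ (s' : Finset ι) (c' : ι → ℝ), LinearIndependent ℝ (fun i : s' => v i) ∧
          (∀ i, 0 ≤ c' i) ∧ (∀ i ∉ s', c' i = 0) ∧ ∑ i, c' i • v i = ∑ i, c i • v i := by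
        rintro b hbs hbsum ⟨j, hj⟩
        have hjs : j ∈ s := by
          by_contra h; rw [hbs j h] at hj; exact lt_irrefl 0 hj
        set F := s.filter (fun i => 0 < b i) with hF
        have hFne : F.Nonempty := ⟨j, Finset.mem_filter.mpr ⟨hjs, hj⟩⟩
        obtain ⟨i₀, hi₀F, hi₀min⟩ := Finset.exists_min_image F (fun i => c i / b i) hFne
        have hi₀s : i₀ ∈ s := (Finset.mem_filter.mp hi₀F).1
        have hbi₀ : 0 < b i₀ := (Finset.mem_filter.mp hi₀F).2
        set t := c i₀ / b i₀ with ht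
        have htnn : 0 ≤ t := div_nonneg (hc i₀) hbi₀.le
        set c' : ι → ℝ := fun i => c i - t * b i with hc'
        have hc'nn : ∀ i, 0 ≤ c' i := by
          intro i
          by_cases hbi : 0 < b i
          · have his : i ∈ s := by
              by_contra h; rw [hbs i h] at hbi; exact lt_irrefl 0 hbi
            have h1 : t ≤ c i / b i := hi₀min i (Finset.mem_filter.mpr ⟨his, hbi⟩)
            have h2 := (le_div_iff₀ hbi).mp h1
            simp only [hc']; linarith
          · push_neg at hbi
            have h1 : t * b i ≤ 0 := mul_nonpos_of_nonneg_of_nonpos htnn hbi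
            have h2 := hc i
            simp only [hc']; linarith
        have hc'i₀ : c' i₀ = 0 := by
          simp only [hc', ht]; field_simp; ring
        have hc'supp : ∀ i ∉ s.erase i₀, c' i = 0 := by
          intro i hi
          rw [Finset.mem_erase] at hi
          push_neg at hi
          by_cases hii : i = i₀
          · rw [hii]; exact hc'i₀
          · have his : i ∉ s := hi hii
            simp only [hc', hcs i his, hbs i his, mul_zero, sub_zero]
        have hsum : ∑ i, c' i • v i = ∑ i, c i • v i := by
          have : ∑ i, c' i • v i = ∑ i, c i • v i - t • ∑ i, b i • v i := by
            rw [Finset.smul_sum, ← Finset.sum_sub_distrib]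
            congr 1; ext i
            simp only [hc', sub_smul, smul_smul]
          rw [this, hbsum, smul_zero, sub_zero]
        obtain ⟨s', c'', h1, h2, h3, h4⟩ :=
          ih (s.erase i₀) (Finset.erase_ssubset hi₀s) c' hc'nn hc'supp
        exact ⟨s', c'', h1, h2, h3, h4.trans hsum⟩
      -- construct b from g
      set b₀ : ι → ℝ := fun i => if h : i ∈ s then g ⟨i, h⟩ else 0 with hb₀
      have hb₀s : ∀ i ∉ s, b₀ i = 0 := fun i hi => by simp [hb₀, hi]
      have hb₀sum : ∑ i, b₀ i • v i = 0 := by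
        have h1 : ∑ i, b₀ i • v i = ∑ i ∈ s, b₀ i • v i := by
          rw [← Finset.sum_subset (Finset.subset_univ s)]
          intro i _ hi; rw [hb₀s i hi, zero_smul]
        have h2 : ∑ i ∈ s, b₀ i • v i = ∑ i : s, g i • v i := by
          rw [← Finset.sum_attach s (fun i => b₀ i • v i)]
          congr 1; ext i
          simp only [hb₀, dif_pos i.2]
        rw [h1, h2, hgsum]
      have hb₀i₁ : b₀ i₁ ≠ 0 := by
        have : b₀ ↑i₁ = g i₁ := by simp [hb₀]
        rw [this]; exact hgi₁
      rcases lt_or_gt_of_ne hb₀i₁ with hneg | hpos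
      · refine key (-b₀) (fun i hi => by simp [hb₀s i hi]) ?_ ⟨i₁, by simpa using hneg⟩
        simp only [Pi.neg_apply, neg_smul, Finset.sum_neg_distrib, hb₀sum, neg_zero]
      · exact key b₀ hb₀s hb₀sum ⟨i₁, hpos⟩

/-- A cone generated by a linearly independent family over a finset is closed. -/
lemma isClosed_coneOf_piece [FiniteDimensional ℝ E] {ι : Type*} [Fintype ι] [DecidableEq ι]
    (v : ι → E) (s : Finset ι) (hli : LinearIndependent ℝ (fun i : s => v i)) :
    IsClosed {x : E | ∃ c : ι → ℝ, (∀ i, 0 ≤ c i) ∧ (∀ i ∉ s, c i = 0) ∧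
      x = ∑ i, c i • v i} := by
  classical
  set T : (s → ℝ) →ₗ[ℝ] E :=
    { toFun := fun d => ∑ i : s, d i • v i
      map_add' := by
        intro d e
        rw [← Finset.sum_add_distrib]
        exact Finset.sum_congr rfl fun i _ => by rw [Pi.add_apply, add_smul]
      map_smul' := by
        intro r d
        rw [RingHom.id_apply, Finset.smul_sum]
        exact Finset.sum_congr rfl fun i _ => by rw [Pi.smul_apply, smul_smul, smul_eq_mul] } with hT
  have hTinj : LinearMap.ker T = ⊥ := by
    rw [LinearMap.ker_eq_bot]
    intro d e hde
    have : ∑ i : s, (d - e) i • v i = 0 := by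
      simp only [Pi.sub_apply, sub_smul, Finset.sum_sub_distrib]
      change T d - T e = 0
      rw [hde, sub_self]
    funext i
    have := Fintype.linearIndependent_iff.mp hli (d - e) this i
    have h2 : d i - e i = 0 := this
    linarith
  obtain ⟨S, hS⟩ := LinearMap.exists_leftInverse_of_injective T hTinj
  have hST : ∀ d, S (T d) = d := fun d => by
    have := congrArg (fun f => f d) hS; simpa using this
  have hset : {x : E | ∃ c : ι → ℝ, (∀ i, 0 ≤ c i) ∧ (∀ i ∉ s, c i = 0) ∧
      x = ∑ i, c i • v i} = (LinearMap.range T : Set E) ∩ S ⁻¹' {d | ∀ i, 0 ≤ d i} := by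
    ext x
    constructor
    · rintro ⟨c, hc, hcs, rfl⟩
      have hxT : ∑ i, c i • v i = T (fun i : s => c i) := by
        simp only [hT, LinearMap.coe_mk, AddHom.coe_mk]
        rw [← Finset.sum_subset (Finset.subset_univ s)
          (fun i _ hi => by rw [hcs i hi, zero_smul])]
        rw [← Finset.sum_attach s (fun i => c i • v i), Finset.univ_eq_attach]
      constructor
      · exact ⟨fun i : s => c i, hxT.symm⟩
      · rw [Set.mem_preimage, hxT, hST]
        exact fun i => hc i
    · rintro ⟨⟨d, rfl⟩, hx⟩
      rw [Set.mem_preimage, hST] at hx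
      refine ⟨fun i => if h : i ∈ s then d ⟨i, h⟩ else 0, ?_, ?_, ?_⟩
      · intro i
        dsimp only
        by_cases h : i ∈ s
        · rw [dif_pos h]; exact hx ⟨i, h⟩
        · rw [dif_neg h]
      · intro i hi; dsimp only; rw [dif_neg hi]
      · simp only [hT, LinearMap.coe_mk, AddHom.coe_mk]
        rw [← Finset.sum_subset (Finset.subset_univ s)
          (fun i _ hi => by rw [dif_neg hi, zero_smul])]
        rw [← Finset.sum_attach s (fun i => (if h : i ∈ s then d ⟨i, h⟩ else 0) • v i),
          Finset.univ_eq_attach]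
        exact Finset.sum_congr rfl fun i _ => by rw [dif_pos i.2]
  rw [hset]
  refine IsClosed.inter (Submodule.closed_of_finiteDimensional _) ?_
  refine IsClosed.preimage (LinearMap.continuous_of_finiteDimensional S) ?_
  have : {d : s → ℝ | ∀ i, 0 ≤ d i} = ⋂ i, {d | 0 ≤ d i} := by ext; simp
  rw [this]
  exact isClosed_iInter (fun i => isClosed_le continuous_const (continuous_apply i))

/-- Finitely generated cones are closed. -/
lemma isClosed_coneOf [FiniteDimensional ℝ E] {ι : Type*} [Fintype ι] (v : ι → E) :
    IsClosed (coneOf v) := by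
  classical
  have hset : coneOf v = ⋃ s : Finset ι,
      {x : E | LinearIndependent ℝ (fun i : s => v i) ∧ ∃ c : ι → ℝ, (∀ i, 0 ≤ c i) ∧
        (∀ i ∉ s, c i = 0) ∧ x = ∑ i, c i • v i} := by
    ext x
    constructor
    · rintro ⟨c, hc, rfl⟩
      obtain ⟨s', c', hli, h2, h3, h4⟩ := coneOf_reduce v Finset.univ c hc
        (fun i hi => absurd (Finset.mem_univ i) hi)
      exact Set.mem_iUnion.mpr ⟨s', hli, c', h2, h3, h4.symm⟩
    · rintro hx
      obtain ⟨s, _, c, hc, _, rfl⟩ := Set.mem_iUnion.mp hx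
      exact ⟨c, hc, rfl⟩
  rw [hset]
  refine isClosed_iUnion_of_finite (fun s => ?_)
  by_cases hli : LinearIndependent ℝ (fun i : s => v i)
  · have : {x : E | LinearIndependent ℝ (fun i : s => v i) ∧ ∃ c : ι → ℝ, (∀ i, 0 ≤ c i) ∧
        (∀ i ∉ s, c i = 0) ∧ x = ∑ i, c i • v i} = {x : E | ∃ c : ι → ℝ, (∀ i, 0 ≤ c i) ∧
        (∀ i ∉ s, c i = 0) ∧ x = ∑ i, c i • v i} := by
      ext x; simp [hli]
    rw [this]
    exact isClosed_coneOf_piece v s hli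
  · have : {x : E | LinearIndependent ℝ (fun i : s => v i) ∧ ∃ c : ι → ℝ, (∀ i, 0 ≤ c i) ∧
        (∀ i ∉ s, c i = 0) ∧ x = ∑ i, c i • v i} = ∅ := by
      ext x; simp [hli]
    rw [this]; exact isClosed_empty

/-- Separate a point from a closed convex cone. -/
lemma cone_separation {E : Type*} [NormedAddCommGroup E] [NormedSpace ℝ E]
    (C : Set E) (hconv : Convex ℝ C) (hcl : IsClosed C) (h0 : (0 : E) ∈ C)
    (hcone : ∀ t : ℝ, 0 ≤ t → ∀ x ∈ C, t • x ∈ C) {z : E} (hz : z ∉ C) :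
    ∃ f : E →L[ℝ] ℝ, (∀ x ∈ C, 0 ≤ f x) ∧ f z < 0 := by
  obtain ⟨f, u, hfa, hfz⟩ := geometric_hahn_banach_closed_point hconv hcl hz
  have hu : 0 < u := by simpa using hfa 0 h0
  have hfC : ∀ x ∈ C, f x ≤ 0 := by
    intro x hx
    by_contra h
    push_neg at h
    have ht : (0 : ℝ) ≤ u / f x := le_of_lt (div_pos hu h)
    have := hfa ((u / f x) • x) (hcone _ ht x hx)
    rw [_root_.map_smul, smul_eq_mul, div_mul_cancel₀ _ (ne_of_gt h)] at this
    exact lt_irrefl u this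
  refine ⟨-f, fun x hx => ?_, ?_⟩
  · simpa using hfC x hx
  · simp only [ContinuousLinearMap.neg_apply, neg_neg, Left.neg_neg_iff]
    exact lt_trans hu hfz

/-- Represent a linear functional on `Fin N → ℝ` as a dot product. -/
lemma exists_dot_of_lm {N : ℕ} (f : (Fin N → ℝ) →ₗ[ℝ] ℝ) :
    ∃ w : Fin N → ℝ, ∀ x, f x = x ⬝ᵥ w := by
  refine ⟨fun i => f (fun j => if i = j then 1 else 0), fun x => ?_⟩
  conv_lhs => rw [pi_eq_sum_univ x]
  rw [map_sum]
  simp only [_root_.map_smul, smul_eq_mul]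
  rfl

lemma exists_dot_of_clm {N : ℕ} (f : (Fin N → ℝ) →L[ℝ] ℝ) :
    ∃ w : Fin N → ℝ, ∀ x, f x = x ⬝ᵥ w :=
  exists_dot_of_lm (f : (Fin N → ℝ) →ₗ[ℝ] ℝ)

/-- Biduality / Farkas: if `z` is nonnegative against every vector of the dual of a closed
convex cone `C` in `Fin N → ℝ`, then `z ∈ C`. -/
lemma mem_of_dual_nonneg {N : ℕ} (C : Set (Fin N → ℝ)) (hconv : Convex ℝ C)
    (hcl : IsClosed C) (h0 : (0 : Fin N → ℝ) ∈ C)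
    (hcone : ∀ t : ℝ, 0 ≤ t → ∀ x ∈ C, t • x ∈ C) {z : Fin N → ℝ}
    (hz : ∀ w : Fin N → ℝ, (∀ x ∈ C, 0 ≤ x ⬝ᵥ w) → 0 ≤ z ⬝ᵥ w) : z ∈ C := by
  by_contra h
  obtain ⟨f, hfC, hfz⟩ := cone_separation C hconv hcl h0 hcone h
  obtain ⟨w, hw⟩ := exists_dot_of_clm f
  have := hz w (fun x hx => by rw [← hw]; exact hfC x hx)
  rw [← hw] at this
  linarith

section helpers

lemma dot_sum {p : ℕ} {α : Type*} (v : Fin p → ℝ) (s : Finset α) (f : α → Fin p → ℝ) :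
    v ⬝ᵥ (∑ j ∈ s, f j) = ∑ j ∈ s, v ⬝ᵥ f j := by
  simp only [dotProduct, Finset.sum_apply, Finset.mul_sum]
  rw [Finset.sum_comm]

lemma dot_smul_right {p : ℕ} (v w : Fin p → ℝ) (c : ℝ) : v ⬝ᵥ (c • w) = c * (v ⬝ᵥ w) := by
  simp only [dotProduct, Pi.smul_apply, smul_eq_mul, Finset.mul_sum]
  exact Finset.sum_congr rfl fun i _ => by ring

lemma mulVec_eq_sum_cols {p q : ℕ} (M : Matrix (Fin p) (Fin q) ℝ) (x : Fin q → ℝ) :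
    M *ᵥ x = ∑ j, x j • (fun i => M i j) := by
  funext i
  simp only [mulVec, dotProduct, Finset.sum_apply, Pi.smul_apply, smul_eq_mul]
  exact Finset.sum_congr rfl fun j _ => by ring

lemma continuous_dot_left {N : ℕ} (x : Fin N → ℝ) :
    Continuous fun w : Fin N → ℝ => x ⬝ᵥ w := by
  unfold dotProduct; fun_prop

end helpers

/-- The dual cone of a set, with respect to the dot product. -/
def dualSet {N : ℕ} (C : Set (Fin N → ℝ)) : Set (Fin N → ℝ) :=
  {w | ∀ x ∈ C, 0 ≤ x ⬝ᵥ w}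

lemma isClosed_dualSet {N : ℕ} (C : Set (Fin N → ℝ)) : IsClosed (dualSet C) := by
  have : dualSet C = ⋂ x ∈ C, {w | 0 ≤ x ⬝ᵥ w} := by
    ext w; simp [dualSet]
  rw [this]
  exact isClosed_biInter fun x _ => isClosed_le continuous_const (continuous_dot_left x)

lemma convex_dualSet {N : ℕ} (C : Set (Fin N → ℝ)) : Convex ℝ (dualSet C) := by
  intro w₁ h₁ w₂ h₂ a b ha hb _
  intro x hx
  have := h₁ x hx; have := h₂ x hx
  rw [dotProduct_add, dot_smul_right, dot_smul_right]
  positivity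

lemma zero_mem_dualSet {N : ℕ} (C : Set (Fin N → ℝ)) : (0 : Fin N → ℝ) ∈ dualSet C :=
  fun x _ => by rw [dotProduct_zero]

lemma smul_mem_dualSet {N : ℕ} (C : Set (Fin N → ℝ)) {t : ℝ} (ht : 0 ≤ t) {w : Fin N → ℝ}
    (hw : w ∈ dualSet C) : t • w ∈ dualSet C := by
  intro x hx
  rw [dot_smul_right]
  exact mul_nonneg ht (hw x hx)

/-- A nonnegative combination of elements of a dual cone is in the dual cone. -/
lemma sum_mem_dualSet {N : ℕ} (C : Set (Fin N → ℝ)) {α : Type*} [Fintype α]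
    (c : α → ℝ) (hc : ∀ i, 0 ≤ c i) (w : α → Fin N → ℝ) (hw : ∀ i, w i ∈ dualSet C) :
    ∑ i, c i • w i ∈ dualSet C := by
  intro x hx
  rw [dot_sum]
  refine Finset.sum_nonneg fun i _ => ?_
  rw [dot_smul_right]
  exact mul_nonneg (hc i) (hw i x hx)

/-- If `l` is in the interior of the dual cone of `K`, it is strictly positive on `K \ {0}`. -/
lemma dot_pos_of_mem_interior_dualSet {N : ℕ} (K : Set (Fin N → ℝ)) {l : Fin N → ℝ}
    (hl : l ∈ interior (dualSet K)) {u : Fin N → ℝ} (hu : u ∈ K) (hune : u ≠ 0) :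
    0 < l ⬝ᵥ u := by
  obtain ⟨ε, hε, hball⟩ := Metric.mem_nhds_iff.mp (mem_interior_iff_mem_nhds.mp hl)
  have huu : 0 < u ⬝ᵥ u := by
    rcases lt_or_eq_of_le (Finset.sum_nonneg fun i _ => mul_self_nonneg (u i) :
      (0:ℝ) ≤ u ⬝ᵥ u) with h | h
    · exact h
    · exact absurd (dotProduct_self_eq_zero.mp h.symm) hune
  set δ : ℝ := ε / (2 * (‖u‖ + 1)) with hδ
  have hupos : (0:ℝ) < ‖u‖ + 1 := by positivity
  have hδpos : 0 < δ := by positivity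
  have hmem : l - δ • u ∈ dualSet K := by
    apply hball
    rw [Metric.mem_ball, dist_eq_norm]
    have : l - δ • u - l = -(δ • u) := sub_sub_cancel_left l (δ • u)
    rw [this, norm_neg, norm_smul, Real.norm_eq_abs, abs_of_pos hδpos]
    calc δ * ‖u‖ < δ * (2 * (‖u‖ + 1)) := by
          apply mul_lt_mul_of_pos_left _ hδpos
          nlinarith [norm_nonneg u]
      _ = ε := by rw [hδ]; exact div_mul_cancel₀ ε (by positivity)
  have h1 : 0 ≤ u ⬝ᵥ (l - δ • u) := hmem u hu
  rw [dotProduct_sub, dot_smul_right] at h1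
  have : 0 < u ⬝ᵥ l := by nlinarith
  rwa [dotProduct_comm] at this

/-- The dual cone of a pointed closed convex cone has nonempty interior. -/
lemma interior_dualSet_nonempty {N : ℕ} (K : Set (Fin N → ℝ))
    (hKcone : ∀ (c : ℝ), 0 ≤ c → ∀ x ∈ K, c • x ∈ K)
    (hKclosed : IsClosed K) (hKconvex : Convex ℝ K)
    (hKpointed : K ∩ (-K) = {0}) :
    (interior (dualSet K)).Nonempty := by
  classical
  have h0K : (0 : Fin N → ℝ) ∈ K := by
    have : (0 : Fin N → ℝ) ∈ ({0} : Set (Fin N → ℝ)) := rfl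
    rw [← hKpointed] at this
    exact this.1
  by_cases hsp : Submodule.span ℝ (dualSet K) = ⊤
  · -- the dual spans: build a basis inside the dual cone
    obtain ⟨b, hbD, hbspan, hbli⟩ := exists_linearIndependent ℝ (dualSet K)
    rw [hsp] at hbspan
    haveI : Fintype b := (hbli.setFinite).fintype
    let B : Module.Basis b ℝ (Fin N → ℝ) := Module.Basis.mk hbli (by rw [Subtype.range_coe, hbspan])
    let e := B.equivFun
    have hcont : Continuous ⇑e := LinearMap.continuous_of_finiteDimensional e.toLinearMap
    set O := ⇑e ⁻¹' {c : b → ℝ | ∀ i, 0 < c i} with hO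
    have hOopen : IsOpen O := by
      refine IsOpen.preimage hcont ?_
      have : {c : b → ℝ | ∀ i, 0 < c i} = ⋂ i, {c | 0 < c i} := by ext; simp
      rw [this]
      exact isOpen_iInter_of_finite fun i =>
        isOpen_lt continuous_const (continuous_apply i)
    have hOD : O ⊆ dualSet K := by
      intro x hx
      have hxsum : ∑ i : b, e x i • B i = x := B.sum_equivFun x
      rw [← hxsum]
      refine sum_mem_dualSet K _ (fun i => (hx i).le) _ (fun i => ?_)
      rw [Module.Basis.mk_apply]
      exact hbD i.2
    have hmem : e.symm (fun _ => 1) ∈ O := by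
      simp only [hO, Set.mem_preimage, LinearEquiv.apply_symm_apply]
      exact fun i => one_pos
    exact ⟨e.symm (fun _ => 1), interior_maximal hOD hOopen hmem⟩
  · -- otherwise, find a nonzero vector orthogonal to the dual, contradicting pointedness
    exfalso
    have hlt : Submodule.span ℝ (dualSet K) < ⊤ := lt_top_iff_ne_top.mpr hsp
    obtain ⟨x, _, hxnot⟩ := SetLike.exists_of_lt hlt
    set π := (Submodule.span ℝ (dualSet K)).mkQ with hπ
    have hπx : π x ≠ 0 := by
      rw [hπ, Submodule.mkQ_apply, ne_eq, Submodule.Quotient.mk_eq_zero]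
      exact hxnot
    obtain ⟨φ, hφ⟩ : ∃ φ : Module.Dual ℝ ((Fin N → ℝ) ⧸ Submodule.span ℝ (dualSet K)),
        φ (π x) ≠ 0 := by
      by_contra h
      push_neg at h
      exact hπx ((Module.forall_dual_apply_eq_zero_iff ℝ (π x)).mp h)
    obtain ⟨w, hw⟩ := exists_dot_of_lm (φ ∘ₗ (π : (Fin N → ℝ) →ₗ[ℝ] _))
    have hwx : x ⬝ᵥ w ≠ 0 := by
      rw [← hw]; exact hφ
    have hwD : ∀ l ∈ dualSet K, l ⬝ᵥ w = 0 := by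
      intro l hl
      rw [← hw]
      have : π l = 0 := by
        rw [hπ, Submodule.mkQ_apply, Submodule.Quotient.mk_eq_zero]
        exact Submodule.subset_span hl
      simp [this]
    have hwK : w ∈ K := by
      refine mem_of_dual_nonneg K hKconvex hKclosed h0K (fun t ht u hu => hKcone t ht u hu) ?_
      intro w' hw'
      rw [dotProduct_comm]
      rw [hwD w' hw']
    have hnwK : -w ∈ K := by
      refine mem_of_dual_nonneg K hKconvex hKclosed h0K (fun t ht u hu => hKcone t ht u hu) ?_
      intro w' hw'
      rw [dotProduct_comm, dotProduct_neg, hwD w' hw']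
      simp
    have : w ∈ K ∩ (-K) := ⟨hwK, Set.mem_neg.mpr hnwK⟩
    rw [hKpointed] at this
    have hw0 : w = 0 := this
    rw [hw0, dotProduct_zero] at hwx
    exact hwx rfl

section coneOfProps

variable {E : Type*} [NormedAddCommGroup E] [NormedSpace ℝ E] {ι : Type*} [Fintype ι]

lemma zero_mem_coneOf (v : ι → E) : (0 : E) ∈ coneOf v :=
  ⟨0, fun _ => le_refl 0, by simp⟩

lemma add_mem_coneOf {v : ι → E} {x y : E} (hx : x ∈ coneOf v) (hy : y ∈ coneOf v) :
    x + y ∈ coneOf v := by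
  obtain ⟨c, hc, rfl⟩ := hx
  obtain ⟨d, hd, rfl⟩ := hy
  refine ⟨c + d, fun i => add_nonneg (hc i) (hd i), ?_⟩
  rw [← Finset.sum_add_distrib]
  exact Finset.sum_congr rfl fun i _ => by rw [Pi.add_apply, add_smul]

lemma smul_mem_coneOf {v : ι → E} {t : ℝ} (ht : 0 ≤ t) {x : E} (hx : x ∈ coneOf v) :
    t • x ∈ coneOf v := by
  obtain ⟨c, hc, rfl⟩ := hx
  refine ⟨t • c, fun i => mul_nonneg ht (hc i), ?_⟩
  rw [Finset.smul_sum]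
  exact Finset.sum_congr rfl fun i _ => by
    rw [Pi.smul_apply, smul_smul, smul_eq_mul]

lemma convex_coneOf (v : ι → E) : Convex ℝ (coneOf v) := by
  intro x hx y hy a b ha hb _
  exact add_mem_coneOf (smul_mem_coneOf ha hx) (smul_mem_coneOf hb hy)

lemma generator_mem_coneOf [DecidableEq ι] (v : ι → E) (i : ι) : v i ∈ coneOf v := by
  refine ⟨fun i' => if i' = i then 1 else 0, fun i' => by positivity, ?_⟩
  have : ∀ i' : ι, (fun i' => if i' = i then (1:ℝ) else 0) i' • v i' =
      if i' = i then v i' else 0 := by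
    intro i'; by_cases h : i' = i <;> simp [h]
  rw [Finset.sum_congr rfl fun i' _ => this i', Finset.sum_ite_eq' Finset.univ i v]
  simp

section PartA

variable {k n m : ℕ}

/-- Characterization of the "values plus constraint" cone. -/
lemma homog_mem_iff (A : Matrix (Fin m) (Fin n) ℝ) (c : Fin n → ℝ) (b : Fin m → ℝ) (t : ℝ) :
    ((b, t) ∈ coneOf (fun j => ((fun i => A i j), c j) : Fin n → (Fin m → ℝ) × ℝ)) ↔
      ∃ x : Fin n → ℝ, (∀ i, 0 ≤ x i) ∧ A *ᵥ x = b ∧ c ⬝ᵥ x = t := by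
  have hsum : ∀ x : Fin n → ℝ,
      (∑ j, x j • (((fun i => A i j), c j) : (Fin m → ℝ) × ℝ)) = (A *ᵥ x, c ⬝ᵥ x) := by
    intro x
    have h1 : (∑ j, x j • (((fun i => A i j), c j) : (Fin m → ℝ) × ℝ)) =
        (∑ j, x j • (fun i => A i j), ∑ j, x j • c j) := by
      rw [Prod.ext_iff]
      constructor
      · rw [Prod.fst_sum]; rfl
      · rw [Prod.snd_sum]; rfl
    rw [h1, Prod.ext_iff]
    constructor
    · rw [mulVec_eq_sum_cols]
    · simp only [dotProduct, smul_eq_mul]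
      exact Finset.sum_congr rfl fun j _ => mul_comm _ _
  constructor
  · rintro ⟨x, hx, hsum'⟩
    rw [hsum x] at hsum'
    exact ⟨x, hx, (Prod.ext_iff.mp hsum'.symm).1, (Prod.ext_iff.mp hsum'.symm).2⟩
  · rintro ⟨x, hx, hAx, hcx⟩
    exact ⟨x, hx, by rw [hsum x, hAx, hcx]⟩

lemma dot_trans_eq (L : Matrix (Fin k) (Fin n) ℝ) (l : Fin k → ℝ) (x : Fin n → ℝ) :
    (Lᵀ *ᵥ l) ⬝ᵥ x = l ⬝ᵥ (L *ᵥ x) := by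
  rw [Matrix.dotProduct_mulVec, Matrix.mulVec_transpose]

/-- Part A: a strictly positive multiplier with dual feasibility yields an efficient point. -/
lemma exists_efficient (K : Set (Fin k → ℝ))
    (L : Matrix (Fin k) (Fin n) ℝ) (A : Matrix (Fin m) (Fin n) ℝ) (b : Fin m → ℝ)
    (hA : ∃ x : Fin n → ℝ, (∀ i, 0 ≤ x i) ∧ A *ᵥ x = b)
    (l : Fin k → ℝ) (U : Matrix (Fin k) (Fin m) ℝ)
    (hl : ∀ u ∈ K, u ≠ 0 → 0 < l ⬝ᵥ u)
    (hU : ∀ i, 0 ≤ ((L - U * A)ᵀ *ᵥ l) i) :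
    ∃ xbar : Fin n → ℝ, ((∀ i, 0 ≤ xbar i) ∧ A *ᵥ xbar = b) ∧
      ¬ ∃ x : Fin n → ℝ, ((∀ i, 0 ≤ x i) ∧ A *ᵥ x = b) ∧
        L *ᵥ xbar - L *ᵥ x ∈ K ∧ L *ᵥ xbar - L *ᵥ x ≠ 0 := by
  classical
  set c : Fin n → ℝ := Lᵀ *ᵥ l with hc
  set T : Set ℝ := {t : ℝ | ∃ x : Fin n → ℝ, (∀ i, 0 ≤ x i) ∧ A *ᵥ x = b ∧ c ⬝ᵥ x = t}
    with hT
  have hTeq : T = (fun t => ((b : Fin m → ℝ), t)) ⁻¹'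
      coneOf (fun j => ((fun i => A i j), c j) : Fin n → (Fin m → ℝ) × ℝ) := by
    ext t
    rw [hT, Set.mem_setOf_eq, Set.mem_preimage, homog_mem_iff]
  have hTclosed : IsClosed T := by
    rw [hTeq]
    exact IsClosed.preimage (continuous_const.prodMk continuous_id) (isClosed_coneOf _)
  obtain ⟨x₀, hx₀, hAx₀⟩ := hA
  have hTne : T.Nonempty := ⟨c ⬝ᵥ x₀, x₀, hx₀, hAx₀, rfl⟩
  -- lower bound
  have hlb : ∀ t ∈ T, (Uᵀ *ᵥ l) ⬝ᵥ b ≤ t := by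
    rintro t ⟨x, hx, hAx, rfl⟩
    have h1 : c ⬝ᵥ x = l ⬝ᵥ (L *ᵥ x) := dot_trans_eq L l x
    have h2 : l ⬝ᵥ (L *ᵥ x) = l ⬝ᵥ ((L - U * A) *ᵥ x) + l ⬝ᵥ ((U * A) *ᵥ x) := by
      rw [Matrix.sub_mulVec, dotProduct_sub]
      ring
    have h3 : l ⬝ᵥ ((L - U * A) *ᵥ x) = ((L - U * A)ᵀ *ᵥ l) ⬝ᵥ x := (dot_trans_eq _ l x).symm
    have h4 : 0 ≤ ((L - U * A)ᵀ *ᵥ l) ⬝ᵥ x :=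
      Finset.sum_nonneg fun i _ => mul_nonneg (hU i) (hx i)
    have h5 : l ⬝ᵥ ((U * A) *ᵥ x) = (Uᵀ *ᵥ l) ⬝ᵥ b := by
      have h6 : (U * A) *ᵥ x = U *ᵥ (A *ᵥ x) := by rw [Matrix.mulVec_mulVec]
      rw [h6, hAx, dot_trans_eq U l b]
    rw [h1, h2, h3, h5]
    linarith
  have hbdd : BddBelow T := ⟨(Uᵀ *ᵥ l) ⬝ᵥ b, fun t ht => hlb t ht⟩
  have hmem := hTclosed.csInf_mem hTne hbdd
  obtain ⟨xbar, hxbar1, hxbar2, hxbar3⟩ := hmem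
  refine ⟨xbar, ⟨hxbar1, hxbar2⟩, ?_⟩
  rintro ⟨x, ⟨hxnn, hAx⟩, hK, hne⟩
  have hpos := hl _ hK hne
  have hdot : l ⬝ᵥ (L *ᵥ xbar - L *ᵥ x) = c ⬝ᵥ xbar - c ⬝ᵥ x := by
    rw [dotProduct_sub, dot_trans_eq L l xbar, dot_trans_eq L l x]
  have hxT : c ⬝ᵥ x ∈ T := ⟨x, hxnn, hAx, rfl⟩
  have hle : sInf T ≤ c ⬝ᵥ x := csInf_le hbdd hxT
  rw [← hxbar3] at hle
  rw [hdot] at hpos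
  linarith

end PartA

section PartB

variable {k n m : ℕ}

/-- Characterization of the homogeneous image cone `R = L({x ≥ 0, Ax = 0})`. -/
lemma R_mem_iff (L : Matrix (Fin k) (Fin n) ℝ) (A : Matrix (Fin m) (Fin n) ℝ)
    (z : Fin k → ℝ) :
    ((z, (0 : Fin m → ℝ)) ∈ coneOf
        (fun j => ((fun i => L i j), (fun i => A i j)) : Fin n → (Fin k → ℝ) × (Fin m → ℝ))) ↔
      ∃ x : Fin n → ℝ, (∀ i, 0 ≤ x i) ∧ A *ᵥ x = 0 ∧ L *ᵥ x = z := by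
  have hsum : ∀ x : Fin n → ℝ,
      (∑ j, x j • (((fun i => L i j), (fun i => A i j)) : (Fin k → ℝ) × (Fin m → ℝ))) =
        (L *ᵥ x, A *ᵥ x) := by
    intro x
    rw [Prod.ext_iff]
    constructor
    · rw [Prod.fst_sum]; exact (mulVec_eq_sum_cols L x).symm
    · rw [Prod.snd_sum]; exact (mulVec_eq_sum_cols A x).symm
  constructor
  · rintro ⟨x, hx, hsum'⟩
    rw [hsum x] at hsum'
    obtain ⟨h1, h2⟩ := Prod.ext_iff.mp hsum'.symm
    exact ⟨x, hx, h2, h1⟩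
  · rintro ⟨x, hx, hAx, hLx⟩
    exact ⟨x, hx, by rw [hsum x, hAx, hLx]⟩

/-- Part B: an efficient point yields a strictly positive multiplier with dual feasibility. -/
lemma exists_multiplier (K : Set (Fin k → ℝ))
    (hKcone : ∀ (c : ℝ), 0 ≤ c → ∀ x ∈ K, c • x ∈ K)
    (hKclosed : IsClosed K) (hKconvex : Convex ℝ K)
    (hKpointed : K ∩ (-K) = {0}) (hKne : K ≠ {0})
    (L : Matrix (Fin k) (Fin n) ℝ) (A : Matrix (Fin m) (Fin n) ℝ) (b : Fin m → ℝ)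
    (xbar : Fin n → ℝ) (hxbarf : (∀ i, 0 ≤ xbar i) ∧ A *ᵥ xbar = b)
    (heff : ¬ ∃ x : Fin n → ℝ, ((∀ i, 0 ≤ x i) ∧ A *ᵥ x = b) ∧
      L *ᵥ xbar - L *ᵥ x ∈ K ∧ L *ᵥ xbar - L *ᵥ x ≠ 0) :
    ∃ (l : Fin k → ℝ) (U : Matrix (Fin k) (Fin m) ℝ) (v : Fin k → ℝ),
      (∀ u ∈ K, u ≠ 0 → 0 < l ⬝ᵥ u) ∧ l ⬝ᵥ v = 0 ∧
      ∀ i, 0 ≤ ((L - U * A)ᵀ *ᵥ l) i := by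
  classical
  have h0K : (0 : Fin k → ℝ) ∈ K := by
    have : (0 : Fin k → ℝ) ∈ ({0} : Set (Fin k → ℝ)) := rfl
    rw [← hKpointed] at this
    exact this.1
  -- the homogeneous image cone R
  set R : Set (Fin k → ℝ) := {z | ∃ x : Fin n → ℝ, (∀ i, 0 ≤ x i) ∧ A *ᵥ x = 0 ∧ L *ᵥ x = z}
    with hR
  have hReq : R = (fun z => (z, (0 : Fin m → ℝ))) ⁻¹' coneOf
      (fun j => ((fun i => L i j), (fun i => A i j)) : Fin n → (Fin k → ℝ) × (Fin m → ℝ)) := by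
    ext z
    rw [hR, Set.mem_setOf_eq, Set.mem_preimage, R_mem_iff]
  have hRclosed : IsClosed R := by
    rw [hReq]
    exact IsClosed.preimage (continuous_id.prodMk continuous_const) (isClosed_coneOf _)
  have hR0 : (0 : Fin k → ℝ) ∈ R := ⟨0, fun _ => le_refl 0, by rw [Matrix.mulVec_zero],
    by rw [Matrix.mulVec_zero]⟩
  have hRadd : ∀ x ∈ R, ∀ y ∈ R, x + y ∈ R := by
    rintro _ ⟨x1, h1, h2, rfl⟩ _ ⟨x2, h4, h5, rfl⟩
    refine ⟨x1 + x2, fun i => add_nonneg (h1 i) (h4 i), ?_, ?_⟩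
    · rw [Matrix.mulVec_add, h2, h5, add_zero]
    · rw [Matrix.mulVec_add]
  have hRsmul : ∀ (t : ℝ), 0 ≤ t → ∀ x ∈ R, t • x ∈ R := by
    rintro t ht _ ⟨x1, h1, h2, rfl⟩
    refine ⟨t • x1, fun i => mul_nonneg ht (h1 i), ?_, ?_⟩
    · rw [Matrix.mulVec_smul, h2, smul_zero]
    · rw [Matrix.mulVec_smul]
  have hRconvex : Convex ℝ R := by
    intro x hx y hy a c ha hc _
    exact hRadd _ (hRsmul a ha x hx) _ (hRsmul c hc y hy)
  -- the key separation: there is l in the interior of K* that is nonnegative on R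
  have hsep : ∃ l, l ∈ interior (dualSet K) ∧ l ∈ dualSet R := by
    by_contra hdisj
    push_neg at hdisj
    have hdisj' : Disjoint (interior (dualSet K)) (dualSet R) := by
      rw [Set.disjoint_left]
      intro a ha ha'
      exact hdisj a ha ha'
    obtain ⟨f, u, hfa, hfb⟩ := geometric_hahn_banach_open
      ((convex_dualSet K).interior) isOpen_interior (convex_dualSet R) hdisj'
    obtain ⟨l₀, hl₀⟩ := interior_dualSet_nonempty K hKcone hKclosed hKconvex hKpointed
    have hu0 : u ≤ 0 := by
      have := hfb 0 (zero_mem_dualSet R)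
      simpa using this
    -- f is nonpositive on the dual of K
    have hfK : ∀ a ∈ dualSet K, f a ≤ 0 := by
      intro a ha
      by_contra hfa'
      push_neg at hfa'
      -- a + ε • l₀ is in the interior for every ε > 0
      have hmem : ∀ ε : ℝ, 0 < ε → a + ε • l₀ ∈ interior (dualSet K) := by
        intro ε hε
        obtain ⟨r, hr, hball⟩ := Metric.mem_nhds_iff.mp (mem_interior_iff_mem_nhds.mp hl₀)
        rw [mem_interior_iff_mem_nhds, Metric.mem_nhds_iff]
        refine ⟨ε * r, by positivity, ?_⟩
        intro y hy
        rw [Metric.mem_ball, dist_eq_norm] at hy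
        have hz : ε⁻¹ • (y - a) ∈ dualSet K := by
          apply hball
          rw [Metric.mem_ball, dist_eq_norm]
          have : ε⁻¹ • (y - a) - l₀ = ε⁻¹ • (y - (a + ε • l₀)) := by
            rw [smul_sub, smul_sub, smul_add, smul_smul,
              inv_mul_cancel₀ (ne_of_gt hε), one_smul]
            abel
          rw [this, norm_smul, Real.norm_eq_abs, abs_of_pos (inv_pos.mpr hε)]
          calc ε⁻¹ * ‖y - (a + ε • l₀)‖ < ε⁻¹ * (ε * r) := by
                apply mul_lt_mul_of_pos_left hy (inv_pos.mpr hε)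
            _ = r := by field_simp
        have hysplit : y = a + ε • (ε⁻¹ • (y - a)) := by
          rw [smul_smul, mul_inv_cancel₀ (ne_of_gt hε), one_smul]
          abel
        rw [hysplit]
        intro x hx
        rw [dotProduct_add, dot_smul_right]
        have := ha x hx
        have := hz x hx
        positivity
      have hcontr : ∀ ε : ℝ, 0 < ε → f a + ε * f l₀ < 0 := by
        intro ε hε
        have := hfa _ (hmem ε hε)
        rw [map_add, _root_.map_smul, smul_eq_mul] at this
        linarith
      have h2 : (0:ℝ) < |f l₀| + 1 := by positivity
      set ε : ℝ := f a / (|f l₀| + 1) with hεdef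
      have hεpos : 0 < ε := by positivity
      have h1 := hcontr ε hεpos
      have h3 : ε * |f l₀| < f a := by
        rw [hεdef, div_mul_eq_mul_div, div_lt_iff₀ h2]
        nlinarith
      have h4 : ε * (-|f l₀|) ≤ ε * f l₀ :=
        mul_le_mul_of_nonneg_left (neg_abs_le (f l₀)) hεpos.le
      rw [mul_neg] at h4
      linarith
    -- f is nonnegative on the dual of R
    have hfR : ∀ c ∈ dualSet R, 0 ≤ f c := by
      intro c hc
      by_contra hfc
      push_neg at hfc
      have hs : (0:ℝ) ≤ (u - 1) / f c := by
        rw [div_nonneg_iff]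
        right
        constructor <;> linarith
      have := hfb (((u - 1) / f c) • c) (smul_mem_dualSet R hs hc)
      rw [_root_.map_smul, smul_eq_mul, div_mul_cancel₀ _ (ne_of_lt hfc)] at this
      linarith
    -- translate to a vector w
    obtain ⟨w, hw⟩ := exists_dot_of_clm f
    have hwR : w ∈ R := by
      refine mem_of_dual_nonneg R hRconvex hRclosed hR0 hRsmul ?_
      intro w' hw'
      rw [dotProduct_comm, ← hw w']
      exact hfR w' hw'
    have hnwK : -w ∈ K := by
      refine mem_of_dual_nonneg K hKconvex hKclosed h0K hKcone ?_
      intro w' hw'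
      rw [dotProduct_comm, dotProduct_neg, ← hw w']
      simpa using hfK w' hw'
    have hwne : w ≠ 0 := by
      intro h0
      have h1 := hfa l₀ hl₀
      rw [hw l₀, h0, dotProduct_zero] at h1
      linarith
    -- contradiction with efficiency
    obtain ⟨x₀, hx₀nn, hx₀A, hx₀L⟩ := hwR
    refine heff ⟨xbar + x₀, ⟨fun i => add_nonneg (hxbarf.1 i) (hx₀nn i), ?_⟩, ?_, ?_⟩
    · rw [Matrix.mulVec_add, hxbarf.2, hx₀A, add_zero]
    · have : L *ᵥ xbar - L *ᵥ (xbar + x₀) = -w := by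
        rw [Matrix.mulVec_add, hx₀L]
        abel
      rw [this]
      exact hnwK
    · have : L *ᵥ xbar - L *ᵥ (xbar + x₀) = -w := by
        rw [Matrix.mulVec_add, hx₀L]
        abel
      rw [this]
      simpa using hwne
  obtain ⟨l, hlint, hlR⟩ := hsep
  -- Farkas: Lᵀ l lies in the cone {Aᵀ y + s : s ≥ 0}
  set gq : (Fin m ⊕ Fin m) ⊕ Fin n → (Fin n → ℝ) :=
    Sum.elim (Sum.elim (fun i => (fun j => A i j)) (fun i => -(fun j => A i j)))
      (fun j => Pi.single j (1:ℝ)) with hgq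
  have single_dot : ∀ (j : Fin n) (w : Fin n → ℝ), Pi.single j (1:ℝ) ⬝ᵥ w = w j := by
    intro j w
    simp [dotProduct, Pi.single_apply]
  have hQmem : Lᵀ *ᵥ l ∈ coneOf gq := by
    refine mem_of_dual_nonneg _ (convex_coneOf gq) (isClosed_coneOf gq)
      (zero_mem_coneOf gq) (fun t ht x hx => smul_mem_coneOf ht hx) ?_
    intro w hwdual
    have hAw : A *ᵥ w = 0 := by
      funext i
      have h1 := hwdual _ (generator_mem_coneOf gq (Sum.inl (Sum.inl i)))
      have h2 := hwdual _ (generator_mem_coneOf gq (Sum.inl (Sum.inr i)))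
      rw [hgq] at h1 h2
      simp only [Sum.elim_inl, Sum.elim_inr] at h1 h2
      rw [neg_dotProduct] at h2
      have h1' : 0 ≤ (A *ᵥ w) i := h1
      have h2' : (A *ᵥ w) i ≤ 0 := by
        have : (0:ℝ) ≤ -((A *ᵥ w) i) := h2
        linarith
      have : (A *ᵥ w) i = 0 := le_antisymm h2' h1'
      rw [this]
      rfl
    have hwnn : ∀ j, 0 ≤ w j := by
      intro j
      have h1 := hwdual _ (generator_mem_coneOf gq (Sum.inr j))
      rw [hgq] at h1
      simp only [Sum.elim_inr] at h1
      rwa [single_dot] at h1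
    rw [dot_trans_eq L l w]
    have hLw : L *ᵥ w ∈ R := ⟨w, hwnn, hAw, rfl⟩
    have := hlR _ hLw
    rwa [dotProduct_comm] at this
  obtain ⟨cc, hccnn, hccsum⟩ := hQmem
  set y : Fin m → ℝ := fun i => cc (Sum.inl (Sum.inl i)) - cc (Sum.inl (Sum.inr i)) with hy
  set s : Fin n → ℝ := fun j => cc (Sum.inr j) with hs
  have hdecomp : Lᵀ *ᵥ l = Aᵀ *ᵥ y + s := by
    rw [hccsum, Fintype.sum_sum_type, Fintype.sum_sum_type]
    have hyy : (∑ i, cc (Sum.inl (Sum.inl i)) • gq (Sum.inl (Sum.inl i))) +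
        ∑ i, cc (Sum.inl (Sum.inr i)) • gq (Sum.inl (Sum.inr i)) = Aᵀ *ᵥ y := by
      rw [mulVec_eq_sum_cols Aᵀ y, ← Finset.sum_add_distrib]
      refine Finset.sum_congr rfl fun i _ => ?_
      rw [hgq]
      simp only [Sum.elim_inl, Sum.elim_inr]
      have : (fun j => Aᵀ j i) = (fun j => A i j) := rfl
      rw [this, hy, smul_neg, sub_smul]
      abel
    have hss : ∑ j, cc (Sum.inr j) • gq (Sum.inr j) = s := by
      funext j'
      rw [hgq]
      simp only [Sum.elim_inr, Finset.sum_apply, Pi.smul_apply, Pi.single_apply,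
        smul_eq_mul, mul_ite, mul_one, mul_zero]
      rw [Finset.sum_ite_eq Finset.univ j' (fun j => cc (Sum.inr j))]
      simp [hs]
    rw [hyy, hss]
  -- l is nonzero
  obtain ⟨u₀, hu₀K, hu₀ne⟩ : ∃ u₀ ∈ K, u₀ ≠ (0 : Fin k → ℝ) := by
    have hss : ({0} : Set (Fin k → ℝ)) ⊂ K :=
      ssubset_of_subset_of_ne (Set.singleton_subset_iff.mpr h0K) (Ne.symm hKne)
    obtain ⟨u₀, hu₀, hu₀n⟩ := Set.exists_of_ssubset hss
    exact ⟨u₀, hu₀, by simpa using hu₀n⟩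
  have hlpos₀ : 0 < l ⬝ᵥ u₀ := dot_pos_of_mem_interior_dualSet K hlint hu₀K hu₀ne
  have hll : 0 < l ⬝ᵥ l := by
    rcases lt_or_eq_of_le (Finset.sum_nonneg fun i _ => mul_self_nonneg (l i) :
        (0:ℝ) ≤ l ⬝ᵥ l) with h | h
    · exact h
    · exfalso
      have : l = 0 := dotProduct_self_eq_zero.mp h.symm
      rw [this, zero_dotProduct] at hlpos₀
      exact lt_irrefl 0 hlpos₀
  set U : Matrix (Fin k) (Fin m) ℝ := Matrix.of (fun i j => l i * y j / (l ⬝ᵥ l)) with hU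
  have hUl : Uᵀ *ᵥ l = y := by
    funext j
    show ∑ i, Uᵀ j i * l i = y j
    have h1 : ∀ i, Uᵀ j i * l i = (l i * l i) * (y j / (l ⬝ᵥ l)) := by
      intro i
      show (l i * y j / (l ⬝ᵥ l)) * l i = (l i * l i) * (y j / (l ⬝ᵥ l))
      ring
    rw [Finset.sum_congr rfl fun i _ => h1 i, ← Finset.sum_mul]
    have h2 : ∑ i, l i * l i = l ⬝ᵥ l := rfl
    rw [h2, mul_div_cancel₀ _ (ne_of_gt hll)]
  have hfinal : (L - U * A)ᵀ *ᵥ l = s := by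
    rw [Matrix.transpose_sub, Matrix.sub_mulVec, Matrix.transpose_mul]
    have h7 : (Aᵀ * Uᵀ) *ᵥ l = Aᵀ *ᵥ (Uᵀ *ᵥ l) := by rw [Matrix.mulVec_mulVec]
    rw [h7, hUl, hdecomp]
    abel
  refine ⟨l, U, 0, ?_, dotProduct_zero l, ?_⟩
  · exact fun u hu hune => dot_pos_of_mem_interior_dualSet K hlint hu hune
  · rw [hfinal]
    exact fun i => hccnn _

end PartB

theorem stmt7 (k n m : ℕ) (K : Set (Fin k → ℝ))
    (hKcone : ∀ (c : ℝ), 0 ≤ c → ∀ x ∈ K, c • x ∈ K)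
    (hKclosed : IsClosed K) (hKconvex : Convex ℝ K)
    (hKpointed : K ∩ (-K) = {0})
    (hKne : K ≠ {0}) (hKuniv : K ≠ Set.univ)
    (L : Matrix (Fin k) (Fin n) ℝ) (A : Matrix (Fin m) (Fin n) ℝ) (b : Fin m → ℝ)
    (hA : ∃ x : Fin n → ℝ, (∀ i, 0 ≤ x i) ∧ A *ᵥ x = b) :
    (¬ ∃ xbar : Fin n → ℝ, ((∀ i, 0 ≤ xbar i) ∧ A *ᵥ xbar = b) ∧
      ¬ ∃ x : Fin n → ℝ, ((∀ i, 0 ≤ x i) ∧ A *ᵥ x = b) ∧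
        L *ᵥ xbar - L *ᵥ x ∈ K ∧ L *ᵥ xbar - L *ᵥ x ≠ 0)
    ↔ ¬ ∃ (l : Fin k → ℝ) (U : Matrix (Fin k) (Fin m) ℝ) (v : Fin k → ℝ),
        (∀ u ∈ K, u ≠ 0 → 0 < l ⬝ᵥ u) ∧ l ⬝ᵥ v = 0 ∧
        ∀ i, 0 ≤ ((L - U * A)ᵀ *ᵥ l) i := by
  apply not_congr
  constructor
  · rintro ⟨xbar, hxbarf, heff⟩
    exact exists_multiplier K hKcone hKclosed hKconvex hKpointed hKne L A b xbar hxbarf heff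
  · rintro ⟨l, U, v, hl, _, hU⟩
    exact exists_efficient K L A b hA l U hl hU
end coneOfProps
end

section
/- If ℬ = {(λ, U, v) ∈ K*⁰ × ℝ^{k×m} × ℝ^k : λᵀv = 0, (L − UA)ᵀλ ∈ ℝ^n_+} is nonempty, then the dual problem of maximizing Ub + v over ℬ with respect to K has no efficient (maximal) solutions if and only if 𝒜 = {x ∈ ℝ^n_+ : Ax = b} is empty. -/
open Matrix Finset


lemma farkas_fin {α : Type*} [Fintype α] :
    ∀ (n : ℕ) (a : Fin n → (α → ℝ)) (b : α → ℝ),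
    (∃ c : Fin n → ℝ, (∀ i, 0 ≤ c i) ∧ ∑ i, c i • a i = b) ∨
    (∃ y : α → ℝ, (∀ i, a i ⬝ᵥ y ≤ 0) ∧ 0 < b ⬝ᵥ y) := by
  intro n
  induction n with
  | zero =>
    intro a b
    by_cases hb : b = 0
    · exact Or.inl ⟨0, fun i => le_refl 0, by simp [hb]⟩
    · refine Or.inr ⟨b, fun i => Fin.elim0 i, ?_⟩
      have h1 : b ⬝ᵥ b ≠ 0 := fun h => hb ((dotProduct_self_eq_zero).mp h)
      have h2 : 0 ≤ b ⬝ᵥ b := Finset.sum_nonneg fun i _ => mul_self_nonneg _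
      exact lt_of_le_of_ne h2 (Ne.symm h1)
  | succ n ih =>
    intro a b
    rcases ih (fun i => a i.castSucc) b with ⟨c, hc, hsum⟩ | ⟨y, hy, hby⟩
    · refine Or.inl ⟨Fin.snoc c 0, fun i => ?_, ?_⟩
      · induction i using Fin.lastCases with
        | last => simp
        | cast j => simpa using hc j
      · rw [Fin.sum_univ_castSucc]
        simpa using hsum
    · by_cases hlast : a (Fin.last n) ⬝ᵥ y ≤ 0
      · refine Or.inr ⟨y, fun i => ?_, hby⟩
        induction i using Fin.lastCases with
        | last => exact hlast
        | cast j => exact hy j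
      push_neg at hlast
      set p := a (Fin.last n) with hp
      have hpy : (0:ℝ) < p ⬝ᵥ y := hlast
      rcases ih (fun i => a i.castSucc - ((a i.castSucc ⬝ᵥ y) / (p ⬝ᵥ y)) • p)
          (b - ((b ⬝ᵥ y) / (p ⬝ᵥ y)) • p) with ⟨c, hc, hsum⟩ | ⟨z, hz, hbz⟩
      · -- feasible case
        obtain ⟨t, ht⟩ : ∃ t : ℝ,
            t = (b ⬝ᵥ y) / (p ⬝ᵥ y) - ∑ i, c i * ((a i.castSucc ⬝ᵥ y) / (p ⬝ᵥ y)) := ⟨_, rfl⟩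
        have htnn : 0 ≤ t := by
          have h1 : 0 < (b ⬝ᵥ y) / (p ⬝ᵥ y) := div_pos hby hpy
          have h2 : ∑ i, c i * ((a i.castSucc ⬝ᵥ y) / (p ⬝ᵥ y)) ≤ 0 :=
            Finset.sum_nonpos fun i _ =>
              mul_nonpos_of_nonneg_of_nonpos (hc i) (div_nonpos_of_nonpos_of_nonneg (hy i) hpy.le)
          rw [ht]; linarith
        refine Or.inl ⟨Fin.snoc c t, fun i => ?_, ?_⟩
        · induction i using Fin.lastCases with
          | last => simpa using htnn
          | cast j => simpa using hc j
        · rw [Fin.sum_univ_castSucc]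
          simp only [Fin.snoc_castSucc, Fin.snoc_last]
          funext x
          have hsx := congrFun hsum x
          simp only [Pi.add_apply, Finset.sum_apply, Pi.smul_apply, Pi.sub_apply,
            smul_eq_mul, ← hp] at hsx ⊢
          have hexp : ∑ i, c i * (a i.castSucc x - a i.castSucc ⬝ᵥ y / (p ⬝ᵥ y) * p x)
              = ∑ i, c i * a i.castSucc x
                - (∑ i, c i * (a i.castSucc ⬝ᵥ y / (p ⬝ᵥ y))) * p x := by
            rw [Finset.sum_mul, ← Finset.sum_sub_distrib]
            exact Finset.sum_congr rfl fun i _ => by ring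
          rw [hexp] at hsx
          rw [ht]
          linear_combination hsx
      · refine Or.inr ⟨z - ((p ⬝ᵥ z) / (p ⬝ᵥ y)) • y, fun i => ?_, ?_⟩
        · induction i using Fin.lastCases with
          | last =>
            rw [dotProduct_sub, dotProduct_smul, smul_eq_mul, ← hp,
              div_mul_cancel₀ _ hpy.ne']
            simp
          | cast j =>
            have h := hz j
            rw [sub_dotProduct, smul_dotProduct, smul_eq_mul] at h
            rw [dotProduct_sub, dotProduct_smul, smul_eq_mul]
            have heq : a j.castSucc ⬝ᵥ z - (p ⬝ᵥ z) / (p ⬝ᵥ y) * (a j.castSucc ⬝ᵥ y)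
                = a j.castSucc ⬝ᵥ z - a j.castSucc ⬝ᵥ y / (p ⬝ᵥ y) * (p ⬝ᵥ z) := by
              field_simp
            rw [heq]; exact h
        · have h := hbz
          rw [sub_dotProduct, smul_dotProduct, smul_eq_mul] at h
          rw [dotProduct_sub, dotProduct_smul, smul_eq_mul]
          have heq : b ⬝ᵥ z - (p ⬝ᵥ z) / (p ⬝ᵥ y) * (b ⬝ᵥ y)
              = b ⬝ᵥ z - b ⬝ᵥ y / (p ⬝ᵥ y) * (p ⬝ᵥ z) := by field_simp
          rw [heq]; exact h

lemma farkas {α ι : Type*} [Fintype α] [Fintype ι] (a : ι → α → ℝ) (b : α → ℝ) :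
    (∃ c : ι → ℝ, (∀ i, 0 ≤ c i) ∧ ∑ i, c i • a i = b) ∨
    (∃ y : α → ℝ, (∀ i, a i ⬝ᵥ y ≤ 0) ∧ 0 < b ⬝ᵥ y) := by
  obtain e := Fintype.equivFin ι
  rcases farkas_fin (Fintype.card ι) (fun j => a (e.symm j)) b with ⟨c, hc, hsum⟩ | ⟨y, hy, hby⟩
  · refine Or.inl ⟨fun i => c (e i), fun i => hc _, ?_⟩
    rw [← hsum]
    exact (Equiv.sum_comp e.symm (fun i => c (e i) • a i)).symm.trans
      (Finset.sum_congr rfl fun j _ => by simp)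
  · refine Or.inr ⟨y, fun i => ?_, hby⟩
    simpa using hy (e i)

lemma dot_swap {m n : ℕ} (A : Matrix (Fin m) (Fin n) ℝ) (x : Fin n → ℝ) (u : Fin m → ℝ) :
    (A *ᵥ x) ⬝ᵥ u = x ⬝ᵥ (Aᵀ *ᵥ u) := by
  simp only [mulVec, dotProduct, transpose_apply, Finset.sum_mul, Finset.mul_sum]
  rw [Finset.sum_comm]
  exact Finset.sum_congr rfl fun i _ => Finset.sum_congr rfl fun j _ => by ring

lemma weak_duality {m n : ℕ} (A : Matrix (Fin m) (Fin n) ℝ) (b : Fin m → ℝ) (c : Fin n → ℝ)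
    (x : Fin n → ℝ) (w : Fin m → ℝ) (hx : ∀ i, 0 ≤ x i) (hAx : A *ᵥ x = b)
    (hw : ∀ j, (Aᵀ *ᵥ w) j ≤ c j) : b ⬝ᵥ w ≤ c ⬝ᵥ x := by
  have h1 : b ⬝ᵥ w = x ⬝ᵥ (Aᵀ *ᵥ w) := by
    rw [← hAx, dot_swap]
  rw [h1, dotProduct_comm c x]
  exact Finset.sum_le_sum fun j _ => mul_le_mul_of_nonneg_left (hw j) (hx j)

lemma strong_duality {m n : ℕ} (A : Matrix (Fin m) (Fin n) ℝ) (b : Fin m → ℝ) (c : Fin n → ℝ)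
    (hP : ∃ x : Fin n → ℝ, (∀ i, 0 ≤ x i) ∧ A *ᵥ x = b)
    (hD : ∃ w : Fin m → ℝ, ∀ j, (Aᵀ *ᵥ w) j ≤ c j) :
    ∃ (x : Fin n → ℝ) (w : Fin m → ℝ), (∀ i, 0 ≤ x i) ∧ A *ᵥ x = b ∧
      (∀ j, (Aᵀ *ᵥ w) j ≤ c j) ∧ c ⬝ᵥ x = b ⬝ᵥ w := by
  obtain ⟨x₀, hx₀, hAx₀⟩ := hP
  obtain ⟨w₀, hw₀⟩ := hD
  -- combined system
  set col : (Fin n ⊕ (Fin m ⊕ Fin m) ⊕ (Fin n ⊕ Unit)) → (Fin m ⊕ Fin n ⊕ Unit) → ℝ :=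
    fun i => match i with
    | Sum.inl j => Sum.elim (fun i' => A i' j) (Sum.elim (fun _ => 0) (fun _ => c j))
    | Sum.inr (Sum.inl (Sum.inl i')) =>
        Sum.elim (fun _ => 0) (Sum.elim (fun j => A i' j) (fun _ => -b i'))
    | Sum.inr (Sum.inl (Sum.inr i')) =>
        Sum.elim (fun _ => 0) (Sum.elim (fun j => -A i' j) (fun _ => b i'))
    | Sum.inr (Sum.inr (Sum.inl j₀)) =>
        Sum.elim (fun _ => 0) (Sum.elim (fun j => if j = j₀ then 1 else 0) (fun _ => 0))
    | Sum.inr (Sum.inr (Sum.inr _)) =>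
        Sum.elim (fun _ => 0) (Sum.elim (fun _ => 0) (fun _ => 1)) with hcol
  set T : (Fin m ⊕ Fin n ⊕ Unit) → ℝ := Sum.elim b (Sum.elim c (fun _ => 0)) with hT
  rcases farkas col T with ⟨κ, hκ, hκsum⟩ | ⟨y, hy, hTy⟩
  · set x : Fin n → ℝ := fun j => κ (Sum.inl j) with hxdef
    set w : Fin m → ℝ := fun i =>
      κ (Sum.inr (Sum.inl (Sum.inl i))) - κ (Sum.inr (Sum.inl (Sum.inr i))) with hwdef
    have hev : ∀ q, (∑ i, κ i • col i) q = T q := fun q => congrFun hκsum q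
    have hrow1 : ∀ i₀, (A *ᵥ x) i₀ = b i₀ := by
      intro i₀
      have h := hev (Sum.inl i₀)
      simp only [Finset.sum_apply, Pi.smul_apply, smul_eq_mul, Fintype.sum_sum_type,
        hcol, hT, Sum.elim_inl, Sum.elim_inr, mul_zero, Finset.sum_const_zero, add_zero] at h
      rw [mulVec, dotProduct]
      rw [← h]
      exact Finset.sum_congr rfl fun j _ => mul_comm _ _
    have hrow2 : ∀ j₀, (Aᵀ *ᵥ w) j₀ + κ (Sum.inr (Sum.inr (Sum.inl j₀))) = c j₀ := by
      intro j₀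
      have h := hev (Sum.inr (Sum.inl j₀))
      simp only [Finset.sum_apply, Pi.smul_apply, smul_eq_mul, Fintype.sum_sum_type,
        hcol, hT, Sum.elim_inl, Sum.elim_inr, mul_zero, Finset.sum_const_zero, zero_add,
        add_zero, mul_ite, mul_one, Finset.sum_ite_eq, Finset.mem_univ, if_true] at h
      rw [mulVec, dotProduct]
      simp only [transpose_apply, hwdef]
      have e : (∑ i, A i j₀ * (κ (Sum.inr (Sum.inl (Sum.inl i))) - κ (Sum.inr (Sum.inl (Sum.inr i)))))
          = ∑ i, κ (Sum.inr (Sum.inl (Sum.inl i))) * A i j₀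
            + ∑ i, κ (Sum.inr (Sum.inl (Sum.inr i))) * -A i j₀ := by
        rw [← Finset.sum_add_distrib]
        exact Finset.sum_congr rfl fun i _ => by ring
      rw [e]
      linarith [h]
    have hrow3 : c ⬝ᵥ x - b ⬝ᵥ w + κ (Sum.inr (Sum.inr (Sum.inr ()))) = 0 := by
      have h := hev (Sum.inr (Sum.inr ()))
      simp only [Finset.sum_apply, Pi.smul_apply, smul_eq_mul, Fintype.sum_sum_type,
        hcol, hT, Sum.elim_inl, Sum.elim_inr, mul_zero, Finset.sum_const_zero, zero_add,
        add_zero, mul_one, Fintype.sum_unique] at h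
      have e1 : c ⬝ᵥ x = ∑ j, κ (Sum.inl j) * c j := by
        rw [dotProduct]
        exact Finset.sum_congr rfl fun j _ => by rw [hxdef]; ring
      have e2 : ∑ i, κ (Sum.inr (Sum.inl (Sum.inl i))) * -b i
            + ∑ i, κ (Sum.inr (Sum.inl (Sum.inr i))) * b i = -(b ⬝ᵥ w) := by
        rw [dotProduct, ← Finset.sum_add_distrib, ← Finset.sum_neg_distrib]
        exact Finset.sum_congr rfl fun i _ => by rw [hwdef]; ring
      rw [e1]
      linarith [h, e2]
    have hxnn : ∀ j, 0 ≤ x j := fun j => hκ _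
    have hAx : A *ᵥ x = b := funext hrow1
    have hw : ∀ j, (Aᵀ *ᵥ w) j ≤ c j := fun j => by
      have := hrow2 j
      have h2 := hκ (Sum.inr (Sum.inr (Sum.inl j)))
      linarith
    have hle : c ⬝ᵥ x ≤ b ⬝ᵥ w := by
      have h2 := hκ (Sum.inr (Sum.inr (Sum.inr ())))
      linarith [hrow3]
    exact ⟨x, w, hxnn, hAx, hw, le_antisymm hle (weak_duality A b c x w hxnn hAx hw)⟩
  · exfalso
    set u : Fin m → ℝ := fun i => y (Sum.inl i) with hu
    set v : Fin n → ℝ := fun j => y (Sum.inr (Sum.inl j)) with hv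
    set t : ℝ := y (Sum.inr (Sum.inr ())) with htd
    have hxcol : ∀ j, (Aᵀ *ᵥ u) j + t * c j ≤ 0 := by
      intro j
      have h := hy (Sum.inl j)
      rw [dotProduct] at h
      simp only [hcol, Fintype.sum_sum_type, Sum.elim_inl, Sum.elim_inr, zero_mul,
        Finset.sum_const_zero, add_zero, zero_add, Fintype.sum_unique] at h
      rw [mulVec, dotProduct]
      calc (∑ i, Aᵀ j i * u i) + t * c j = (∑ i, A i j * y (Sum.inl i)) + c j * y (Sum.inr (Sum.inr ())) := by
            simp [transpose_apply, hu, htd]; ring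
        _ ≤ 0 := h
    have hwcol : ∀ i, (A *ᵥ v) i = t * b i := by
      intro i
      have h1 := hy (Sum.inr (Sum.inl (Sum.inl i)))
      have h2 := hy (Sum.inr (Sum.inl (Sum.inr i)))
      rw [dotProduct] at h1 h2
      simp only [hcol, Fintype.sum_sum_type, Sum.elim_inl, Sum.elim_inr, zero_mul,
        Finset.sum_const_zero, add_zero, zero_add, Fintype.sum_unique, neg_mul] at h1 h2
      rw [mulVec, dotProduct]
      have e1 : (∑ j, A i j * v j) + (- b i) * t ≤ 0 := by
        simpa [hv, htd] using h1
      have e2 : 0 ≤ (∑ j, A i j * v j) + (- b i) * t := by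
        have : (∑ j, -(A i j * y (Sum.inr (Sum.inl j)))) + b i * y (Sum.inr (Sum.inr ())) ≤ 0 := by
          simpa using h2
        have := this
        simp only [Finset.sum_neg_distrib] at this
        nlinarith [this]
      nlinarith [e1, e2]
    have hvnp : ∀ j, v j ≤ 0 := by
      intro j
      have h := hy (Sum.inr (Sum.inr (Sum.inl j)))
      rw [dotProduct] at h
      simp only [hcol, Fintype.sum_sum_type, Sum.elim_inl, Sum.elim_inr, zero_mul,
        Finset.sum_const_zero, add_zero, zero_add, Fintype.sum_unique, ite_mul, one_mul,
        Finset.sum_ite_eq', Finset.mem_univ, if_true] at h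
      simpa [hv] using h
    have htnp : t ≤ 0 := by
      have h := hy (Sum.inr (Sum.inr (Sum.inr ())))
      rw [dotProduct] at h
      simp only [hcol, Fintype.sum_sum_type, Sum.elim_inl, Sum.elim_inr, zero_mul,
        Finset.sum_const_zero, add_zero, zero_add, Fintype.sum_unique, one_mul] at h
      simpa [htd] using h
    have hTy' : 0 < b ⬝ᵥ u + c ⬝ᵥ v := by
      rw [dotProduct] at hTy
      simp only [hT, Fintype.sum_sum_type, Sum.elim_inl, Sum.elim_inr, zero_mul,
        Finset.sum_const_zero, add_zero, Fintype.sum_unique] at hTy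
      rw [dotProduct, dotProduct]
      simpa [hu, hv] using hTy
    rcases eq_or_lt_of_le htnp with ht0 | htneg
    · -- t = 0
      have hbu : b ⬝ᵥ u ≤ 0 := by
        have h1 : b ⬝ᵥ u = x₀ ⬝ᵥ (Aᵀ *ᵥ u) := by
          rw [← hAx₀, dot_swap]
        rw [h1, dotProduct]
        apply Finset.sum_nonpos
        intro j _
        have hj := hxcol j
        rw [ht0, zero_mul, add_zero] at hj
        exact mul_nonpos_of_nonneg_of_nonpos (hx₀ j) hj
      have hcv : c ⬝ᵥ v ≤ 0 := by
        have h1 : (Aᵀ *ᵥ w₀) ⬝ᵥ v = w₀ ⬝ᵥ (A *ᵥ v) := by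
          rw [dot_swap Aᵀ w₀ v, transpose_transpose]
        have h2 : w₀ ⬝ᵥ (A *ᵥ v) = 0 := by
          rw [dotProduct]
          apply Finset.sum_eq_zero
          intro i _
          rw [hwcol i, ht0]
          ring
        have h3 : c ⬝ᵥ v ≤ (Aᵀ *ᵥ w₀) ⬝ᵥ v := by
          rw [dotProduct, dotProduct]
          apply Finset.sum_le_sum
          intro j _
          exact mul_le_mul_of_nonpos_right (hw₀ j) (hvnp j)
        linarith [h1, h2, h3]
      linarith
    · -- t < 0
      set τ : ℝ := -t with hτ
      have hτpos : 0 < τ := by simp [hτ]; linarith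
      set x' : Fin n → ℝ := fun j => -v j / τ with hx'
      set w' : Fin m → ℝ := fun i => u i / τ with hw'
      have hx'nn : ∀ j, 0 ≤ x' j := fun j =>
        div_nonneg (by linarith [hvnp j]) hτpos.le
      have hAx' : A *ᵥ x' = b := by
        funext i
        rw [mulVec, dotProduct]
        have : ∑ j, A i j * x' j = (∑ j, A i j * v j) * (-1/τ) := by
          rw [Finset.sum_mul]
          exact Finset.sum_congr rfl fun j _ => by rw [hx']; field_simp
        rw [this]
        have := hwcol i
        rw [mulVec, dotProduct] at this
        have ht' : t ≠ 0 := ne_of_lt htneg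
        rw [this, hτ]
        field_simp
      have hw'feas : ∀ j, (Aᵀ *ᵥ w') j ≤ c j := by
        intro j
        have h := hxcol j
        have : (Aᵀ *ᵥ w') j = (Aᵀ *ᵥ u) j / τ := by
          rw [mulVec, mulVec, dotProduct, dotProduct, Finset.sum_div]
          exact Finset.sum_congr rfl fun i _ => by rw [hw']; ring
        rw [this]
        rw [div_le_iff₀ hτpos]
        have hcj : c j * τ = -(t * c j) := by rw [hτ]; ring
        linarith [h, hcj]
      have hwd := weak_duality A b c x' w' hx'nn hAx' hw'feas
      -- b ⬝ᵥ w' ≤ c ⬝ᵥ x'  i.e. b⬝u/τ ≤ -c⬝v/τ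
      have e1 : b ⬝ᵥ w' = (b ⬝ᵥ u) / τ := by
        rw [dotProduct, dotProduct, Finset.sum_div]
        exact Finset.sum_congr rfl fun i _ => by rw [hw']; ring
      have e2 : c ⬝ᵥ x' = -(c ⬝ᵥ v) / τ := by
        rw [dotProduct, dotProduct, eq_div_iff hτpos.ne', Finset.sum_mul,
          ← Finset.sum_neg_distrib]
        refine Finset.sum_congr rfl fun j _ => ?_
        rw [hx']
        field_simp
      have h4 := mul_le_mul_of_nonneg_right hwd hτpos.le
      rw [e1, e2, div_mul_cancel₀ _ hτpos.ne', div_mul_cancel₀ _ hτpos.ne'] at h4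
      linarith

lemma constr_split {k n m : ℕ} (L : Matrix (Fin k) (Fin n) ℝ) (U : Matrix (Fin k) (Fin m) ℝ)
    (A : Matrix (Fin m) (Fin n) ℝ) (l : Fin k → ℝ) :
    (L - U * A)ᵀ *ᵥ l = Lᵀ *ᵥ l - Aᵀ *ᵥ (Uᵀ *ᵥ l) := by
  rw [transpose_sub, sub_mulVec, transpose_mul, mulVec_mulVec]

theorem stmt8 (k n m : ℕ) (K : Set (Fin k → ℝ))
    (hKcone : ∀ (c : ℝ), 0 ≤ c → ∀ x ∈ K, c • x ∈ K)
    (hKclosed : IsClosed K) (hKconvex : Convex ℝ K)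
    (hKpointed : K ∩ (-K) = {0})
    (hKne : K ≠ {0}) (hKuniv : K ≠ Set.univ)
    (L : Matrix (Fin k) (Fin n) ℝ) (A : Matrix (Fin m) (Fin n) ℝ) (b : Fin m → ℝ)
    (hB : ∃ (l : Fin k → ℝ) (U : Matrix (Fin k) (Fin m) ℝ) (v : Fin k → ℝ),
      (∀ u ∈ K, u ≠ 0 → 0 < l ⬝ᵥ u) ∧ l ⬝ᵥ v = 0 ∧
      ∀ i, 0 ≤ ((L - U * A)ᵀ *ᵥ l) i) :
    (¬ ∃ (lbar : Fin k → ℝ) (Ubar : Matrix (Fin k) (Fin m) ℝ) (vbar : Fin k → ℝ),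
      ((∀ u ∈ K, u ≠ 0 → 0 < lbar ⬝ᵥ u) ∧ lbar ⬝ᵥ vbar = 0 ∧
        ∀ i, 0 ≤ ((L - Ubar * A)ᵀ *ᵥ lbar) i) ∧
      ¬ ∃ (l : Fin k → ℝ) (U : Matrix (Fin k) (Fin m) ℝ) (v : Fin k → ℝ),
        ((∀ u ∈ K, u ≠ 0 → 0 < l ⬝ᵥ u) ∧ l ⬝ᵥ v = 0 ∧
          ∀ i, 0 ≤ ((L - U * A)ᵀ *ᵥ l) i) ∧
        (U *ᵥ b + v) - (Ubar *ᵥ b + vbar) ∈ K ∧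
        (U *ᵥ b + v) - (Ubar *ᵥ b + vbar) ≠ 0)
    ↔ ¬ ∃ x : Fin n → ℝ, (∀ i, 0 ≤ x i) ∧ A *ᵥ x = b := by
  obtain ⟨l₀, U₀, v₀, hl₀, hl₀v₀, hU₀⟩ := hB
  have h0K : (0 : Fin k → ℝ) ∈ K := by
    have h : (0 : Fin k → ℝ) ∈ K ∩ (-K) := by rw [hKpointed]; rfl
    exact h.1
  obtain ⟨u₀, hu₀K, hu₀ne⟩ : ∃ u ∈ K, u ≠ 0 := by
    by_contra h
    push_neg at h
    apply hKne
    refine Set.eq_of_subset_of_subset (fun u hu => ?_) (fun u hu => ?_)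
    · simpa using h u hu
    · rw [Set.mem_singleton_iff] at hu
      rw [hu]; exact h0K
  rw [not_iff_not]
  constructor
  · -- maximal element exists → A nonempty
    rintro ⟨lbar, Ubar, vbar, ⟨hlbar, hlv, hfeas⟩, hmax⟩
    by_contra hA
    apply hmax
    rcases farkas (fun j : Fin n => fun i : Fin m => A i j) b with ⟨x, hx, hsum⟩ | ⟨y, hyA, hyb⟩
    · exfalso
      apply hA
      refine ⟨x, hx, ?_⟩
      funext i
      have := congrFun hsum i
      simp only [Finset.sum_apply, Pi.smul_apply, smul_eq_mul] at this
      rw [mulVec, dotProduct, ← this]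
      exact Finset.sum_congr rfl fun j _ => mul_comm _ _
    · set U' : Matrix (Fin k) (Fin m) ℝ := Matrix.of (fun i j => Ubar i j + u₀ i * y j) with hU'
      have key : ∀ j, ((L - U' * A)ᵀ *ᵥ lbar) j
          = ((L - Ubar * A)ᵀ *ᵥ lbar) j - (lbar ⬝ᵥ u₀) * ((fun i => A i j) ⬝ᵥ y) := by
        intro j
        simp only [mulVec, dotProduct, transpose_apply, Matrix.sub_apply, Matrix.mul_apply,
          hU', Matrix.of_apply]
        rw [Finset.sum_mul, ← Finset.sum_sub_distrib]
        refine Finset.sum_congr rfl fun i _ => ?_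
        have e : ∑ p, (Ubar i p + u₀ i * y p) * A p j
            = (∑ p, Ubar i p * A p j) + u₀ i * ∑ p, A p j * y p := by
          rw [Finset.mul_sum, ← Finset.sum_add_distrib]
          exact Finset.sum_congr rfl fun p _ => by ring
        rw [e]
        ring
      have hdiff : (U' *ᵥ b + vbar) - (Ubar *ᵥ b + vbar) = (b ⬝ᵥ y) • u₀ := by
        funext i
        simp only [Pi.sub_apply, Pi.add_apply, Pi.smul_apply, smul_eq_mul, mulVec, dotProduct,
          hU', Matrix.of_apply]
        have e : ∑ p, (Ubar i p + u₀ i * y p) * b p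
            = (∑ p, Ubar i p * b p) + (∑ p, b p * y p) * u₀ i := by
          rw [Finset.sum_mul, ← Finset.sum_add_distrib]
          exact Finset.sum_congr rfl fun p _ => by ring
        rw [e]
        ring
      refine ⟨lbar, U', vbar, ⟨hlbar, hlv, fun j => ?_⟩, ?_, ?_⟩
      · rw [key j]
        have h1 := hfeas j
        have h2 := hyA j
        have h3 := hlbar u₀ hu₀K hu₀ne
        nlinarith
      · rw [hdiff]
        exact hKcone _ hyb.le u₀ hu₀K
      · rw [hdiff]
        exact smul_ne_zero (ne_of_gt hyb) hu₀ne
  · -- A nonempty → maximal element exists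
    rintro ⟨x, hx, hAx⟩
    set c : Fin n → ℝ := Lᵀ *ᵥ l₀ with hc
    have hdual : ∀ j, (Aᵀ *ᵥ (U₀ᵀ *ᵥ l₀)) j ≤ c j := by
      intro j
      have h := hU₀ j
      rw [constr_split] at h
      simp only [Pi.sub_apply] at h
      linarith
    obtain ⟨xs, ws, hxs, hAxs, hws, hval⟩ :=
      strong_duality A b c ⟨x, hx, hAx⟩ ⟨U₀ᵀ *ᵥ l₀, hdual⟩
    have hl₀pos := hl₀ u₀ hu₀K hu₀ne
    have hl₀ne : l₀ ⬝ᵥ l₀ ≠ 0 := by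
      intro h
      rw [dotProduct_self_eq_zero] at h
      rw [h] at hl₀pos
      simp [dotProduct] at hl₀pos
    set Us : Matrix (Fin k) (Fin m) ℝ :=
      Matrix.of (fun i j => l₀ i * ws j / (l₀ ⬝ᵥ l₀)) with hUs
    have hUT : Usᵀ *ᵥ l₀ = ws := by
      funext j
      rw [mulVec, dotProduct]
      simp only [transpose_apply, hUs, Matrix.of_apply]
      have e : ∑ i, l₀ i * ws j / (l₀ ⬝ᵥ l₀) * l₀ i
          = (∑ i, l₀ i * l₀ i) * (ws j / (l₀ ⬝ᵥ l₀)) := by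
        rw [Finset.sum_mul]
        exact Finset.sum_congr rfl fun i _ => by ring
      rw [e, show (∑ i, l₀ i * l₀ i) = l₀ ⬝ᵥ l₀ from rfl]
      field_simp
    set vs : Fin k → ℝ := L *ᵥ xs - Us *ᵥ b with hvs
    have hsum : Us *ᵥ b + vs = L *ᵥ xs := by
      funext i
      simp [hvs]
    refine ⟨l₀, Us, vs, ⟨hl₀, ?_, ?_⟩, ?_⟩
    · -- l₀ ⬝ᵥ vs = 0
      rw [hvs, dotProduct_sub]
      have e1 : l₀ ⬝ᵥ (L *ᵥ xs) = c ⬝ᵥ xs := by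
        rw [dotProduct_comm, dot_swap, hc, dotProduct_comm]
      have e2 : l₀ ⬝ᵥ (Us *ᵥ b) = b ⬝ᵥ ws := by
        rw [dotProduct_comm, dot_swap, hUT, dotProduct_comm]
      rw [e1, e2, hval]
      ring
    · -- constraints
      intro j
      rw [constr_split, hUT]
      simp only [Pi.sub_apply]
      rw [← hc]
      linarith [hws j]
    · -- maximality
      rintro ⟨l, U, v, ⟨hl, hlv, hconstr⟩, hdK, hdne⟩
      have hpos := hl _ hdK hdne
      rw [hsum] at hpos
      have e3 : l ⬝ᵥ ((U *ᵥ b + v) - (L *ᵥ xs))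
          = l ⬝ᵥ v - xs ⬝ᵥ ((L - U * A)ᵀ *ᵥ l) := by
        rw [dotProduct_sub, dotProduct_add, constr_split, dotProduct_sub xs]
        have e4 : l ⬝ᵥ (U *ᵥ b) = xs ⬝ᵥ (Aᵀ *ᵥ (Uᵀ *ᵥ l)) := by
          rw [dotProduct_comm, dot_swap, ← hAxs, dot_swap]
        have e5 : l ⬝ᵥ (L *ᵥ xs) = xs ⬝ᵥ (Lᵀ *ᵥ l) := by
          rw [dotProduct_comm, dot_swap]
        rw [e4, e5]
        ring
      rw [e3, hlv] at hpos
      have hnn : 0 ≤ xs ⬝ᵥ ((L - U * A)ᵀ *ᵥ l) :=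
        Finset.sum_nonneg fun j _ => mul_nonneg (hxs j) (hconstr j)
      linarith
end

section
/- It holds h(ℬ) ⊆ h^L(ℬ^L), where ℬ = {(λ, U, v) ∈ K*⁰ × ℝ^{k×m} × ℝ^k : λᵀv = 0, (L − UA)ᵀλ ∈ ℝ^n_+} with h(λ, U, v) = Ub + v, and ℬ^L = {(λ, z, v) ∈ K*⁰ × ℝ^m × ℝ^k : λᵀv − zᵀb ≤ 0 and Lᵀλ − Aᵀz ∈ ℝ^n_+} with h^L(λ, z, v) = v. -/
open Matrix

theorem stmt10 (k n m : ℕ) (K : Set (Fin k → ℝ))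
    (hKcone : ∀ (c : ℝ), 0 ≤ c → ∀ x ∈ K, c • x ∈ K)
    (hKclosed : IsClosed K) (hKconvex : Convex ℝ K)
    (hKpointed : K ∩ (-K) = {0})
    (hKne : K ≠ {0}) (hKuniv : K ≠ Set.univ)
    (L : Matrix (Fin k) (Fin n) ℝ) (A : Matrix (Fin m) (Fin n) ℝ) (b : Fin m → ℝ) :
    {w : Fin k → ℝ | ∃ (l : Fin k → ℝ) (U : Matrix (Fin k) (Fin m) ℝ) (v : Fin k → ℝ),
      ((∀ u ∈ K, u ≠ 0 → 0 < l ⬝ᵥ u) ∧ l ⬝ᵥ v = 0 ∧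
        ∀ i, 0 ≤ ((L - U * A)ᵀ *ᵥ l) i) ∧ U *ᵥ b + v = w} ⊆
    {w : Fin k → ℝ | ∃ (l : Fin k → ℝ) (z : Fin m → ℝ) (v : Fin k → ℝ),
      ((∀ u ∈ K, u ≠ 0 → 0 < l ⬝ᵥ u) ∧ l ⬝ᵥ v - z ⬝ᵥ b ≤ 0 ∧
        ∀ i, 0 ≤ (Lᵀ *ᵥ l - Aᵀ *ᵥ z) i) ∧ v = w} := by
  rintro w ⟨l, U, v, ⟨hl, hlv, hpos⟩, rfl⟩
  refine ⟨l, Uᵀ *ᵥ l, U *ᵥ b + v, ⟨hl, ?_, ?_⟩, rfl⟩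
  · have h1 : l ⬝ᵥ (U *ᵥ b + v) = (Uᵀ *ᵥ l) ⬝ᵥ b + l ⬝ᵥ v := by
      rw [dotProduct_add, dotProduct_mulVec, ← vecMul_transpose, transpose_transpose]
    rw [h1, hlv]
    simp
  · intro i
    have := hpos i
    simpa [transpose_sub, transpose_mul, sub_mulVec, mulVec_mulVec] using this
end

section
/- It holds h^H(ℬ^H) ⊆ h(ℬ), where ℬ^H = {U ∈ ℝ^{k×m} : there is no x ∈ ℝ^n_+ with (L − UA)x ∈ (−K) \ {0}}, h^H(U) = Ub + Min((L − UA)(ℝ^n_+), K), and ℬ = {(λ, U, v) ∈ K*⁰ × ℝ^{k×m} × ℝ^k : λᵀv = 0, (L − UA)ᵀλ ∈ ℝ^n_+} with h(λ, U, v) = Ub + v. That is, for every U ∈ ℬ^H and every minimal element w of (L − UA)(ℝ^n_+) with respect to K, there exists (λ, U', v) ∈ ℬ with Ub + w = U'b + v. -/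
open Matrix Set

variable {E : Type*} [NormedAddCommGroup E] [NormedSpace ℝ E] [FiniteDimensional ℝ E]

/-- The set of nonnegative combinations (over a finite index set) of a family of vectors
is closed (finitely generated cones are closed). -/
lemma isClosed_coneCombo {ι : Type*} [Fintype ι] [DecidableEq ι] (v : ι → E) (s : Finset ι) :
    IsClosed {x : E | ∃ c : ι → ℝ, (∀ i, 0 ≤ c i) ∧ x = ∑ i ∈ s, c i • v i} := by
  classical
  induction s using Finset.strongInduction with
  | _ s ih =>
  by_cases hli : LinearIndependent ℝ (fun i : {x // x ∈ s} => v i)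
  · set φ : ({x // x ∈ s} → ℝ) →ₗ[ℝ] E :=
      { toFun := fun c => ∑ i : {x // x ∈ s}, c i • v i
        map_add' := by
          intro a b
          simp [add_smul, Finset.sum_add_distrib]
        map_smul' := by
          intro r a
          simp [smul_smul, Finset.smul_sum] } with hφdef
    have hker : LinearMap.ker φ = ⊥ := by
      rw [LinearMap.ker_eq_bot']
      intro c hc
      funext i
      exact Fintype.linearIndependent_iff.mp hli c hc i
    have hce := LinearMap.isClosedEmbedding_of_injective hker
    have horth : IsClosed {c : {x // x ∈ s} → ℝ | ∀ i, 0 ≤ c i} := by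
      have : {c : {x // x ∈ s} → ℝ | ∀ i, 0 ≤ c i} = ⋂ i, {c | 0 ≤ c i} := by
        ext; simp [Set.mem_iInter]
      rw [this]
      exact isClosed_iInter fun i => isClosed_le continuous_const (continuous_apply i)
    have hset : {x : E | ∃ c : ι → ℝ, (∀ i, 0 ≤ c i) ∧ x = ∑ i ∈ s, c i • v i}
        = φ '' {c : {x // x ∈ s} → ℝ | ∀ i, 0 ≤ c i} := by
      ext x
      constructor
      · rintro ⟨c, hc, rfl⟩
        refine ⟨fun i => c i, fun i => hc i, ?_⟩
        simp only [hφdef, LinearMap.coe_mk, AddHom.coe_mk]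
        exact Finset.sum_coe_sort s (fun i => c i • v i)
      · rintro ⟨c, hc, rfl⟩
        refine ⟨fun i => if h : i ∈ s then c ⟨i, h⟩ else 0, fun i => ?_, ?_⟩
        · by_cases h : i ∈ s
          · simpa [h] using hc ⟨i, h⟩
          · simp [h]
        · simp only [hφdef, LinearMap.coe_mk, AddHom.coe_mk]
          rw [← Finset.sum_coe_sort s (fun i => (if h : i ∈ s then c ⟨i, h⟩ else 0) • v i)]
          apply Finset.sum_congr rfl
          intro i _
          simp
    rw [hset]
    exact hce.isClosedMap _ horth
  · obtain ⟨g, hgsum, i₀, hgi₀⟩ := Fintype.not_linearIndependent_iff.mp hli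
    -- produce d : ι → ℝ supported in s, with zero combination and a negative entry on s
    obtain ⟨d, hd0, hdsum, j₁, hj₁s, hj₁⟩ :
        ∃ d : ι → ℝ, (∀ i, i ∉ s → d i = 0) ∧ (∑ i ∈ s, d i • v i) = 0 ∧
          ∃ j, j ∈ s ∧ d j < 0 := by
      by_cases hneg : ∃ i : {x // x ∈ s}, g i < 0
      · obtain ⟨j, hj⟩ := hneg
        refine ⟨fun i => if h : i ∈ s then g ⟨i, h⟩ else 0, fun i hi => by simp [hi], ?_,
          j, j.2, by simp [j.2, hj]⟩
        rw [← Finset.sum_coe_sort s]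
        rw [← hgsum]
        apply Finset.sum_congr rfl
        intro i _
        simp
      · push_neg at hneg
        have hi₀pos : 0 < g i₀ := lt_of_le_of_ne (hneg i₀) (Ne.symm hgi₀)
        refine ⟨fun i => if h : i ∈ s then -g ⟨i, h⟩ else 0, fun i hi => by simp [hi], ?_,
          i₀, i₀.2, by simp [i₀.2, Subtype.coe_eta, hi₀pos]⟩
        rw [← Finset.sum_coe_sort s]
        have : ∑ i : {x // x ∈ s}, (if h : (i : ι) ∈ s then -g ⟨i, h⟩ else 0) • v i
            = -∑ i : {x // x ∈ s}, g i • v i := by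
          rw [← Finset.sum_neg_distrib]
          apply Finset.sum_congr rfl
          intro i _
          simp [neg_smul]
        rw [this, hgsum, neg_zero]
    have hset : {x : E | ∃ c : ι → ℝ, (∀ i, 0 ≤ c i) ∧ x = ∑ i ∈ s, c i • v i}
        = ⋃ j ∈ s.filter (fun j => d j < 0),
            {x : E | ∃ c : ι → ℝ, (∀ i, 0 ≤ c i) ∧ x = ∑ i ∈ s.erase j, c i • v i} := by
      ext x
      simp only [Set.mem_iUnion, Set.mem_setOf_eq, Finset.mem_filter]
      constructor
      · rintro ⟨c, hc, rfl⟩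
        set T := s.filter (fun i => d i < 0) with hT
        have hTne : T.Nonempty := ⟨j₁, Finset.mem_filter.mpr ⟨hj₁s, hj₁⟩⟩
        obtain ⟨j, hjT, hjmin⟩ := Finset.exists_min_image T (fun i => c i / (-d i)) hTne
        obtain ⟨hjs, hjd⟩ := Finset.mem_filter.mp hjT
        set t := c j / (-d j) with ht
        have hdj : 0 < -d j := by linarith
        have ht0 : 0 ≤ t := div_nonneg (hc j) hdj.le
        refine ⟨j, ⟨hjs, hjd⟩, fun i => c i + t * d i, ?_, ?_⟩
        · intro i
          show 0 ≤ c i + t * d i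
          by_cases his : i ∈ s
          · by_cases hdi : d i < 0
            · have hiT : i ∈ T := Finset.mem_filter.mpr ⟨his, hdi⟩
              have := hjmin i hiT
              have hdi' : 0 < -d i := by linarith
              rw [le_div_iff₀ hdi'] at this
              have h2 : t * -d i = -(t * d i) := by ring
              linarith
            · push_neg at hdi
              have : 0 ≤ t * d i := mul_nonneg ht0 hdi
              linarith [hc i]
          · rw [hd0 i his, mul_zero, add_zero]; exact hc i
        · have hcj : c j + t * d j = 0 := by
            rw [ht]
            field_simp
            rw [div_self (by linarith : d j ≠ 0)]; ring
          have : ∑ i ∈ s, (c i + t * d i) • v i = ∑ i ∈ s, c i • v i := by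
            have expand : ∀ i, (c i + t * d i) • v i = c i • v i + t • (d i • v i) := by
              intro i
              rw [add_smul, smul_smul]
            simp_rw [expand]
            rw [Finset.sum_add_distrib, ← Finset.smul_sum, hdsum, smul_zero, add_zero]
          rw [← this, ← Finset.add_sum_erase s _ hjs, hcj, zero_smul, zero_add]
      · rintro ⟨j, ⟨hjs, _⟩, c, hc, rfl⟩
        refine ⟨Function.update c j 0, fun i => ?_, ?_⟩
        · rcases eq_or_ne i j with rfl | h
          · simp
          · simp [Function.update_of_ne h, hc i]
        · rw [← Finset.add_sum_erase s _ hjs]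
          simp only [Function.update_self, zero_smul, zero_add]
          apply Finset.sum_congr rfl
          intro i hi
          rw [Function.update_of_ne (Finset.ne_of_mem_erase hi)]
    rw [hset]
    apply isClosed_biUnion_finset
    intro j hj
    exact ih _ (Finset.erase_ssubset (Finset.mem_filter.mp hj).1)


variable {E : Type*} [NormedAddCommGroup E] [NormedSpace ℝ E] [FiniteDimensional ℝ E]

lemma sum_eq_sum_comp_of_eq_zero {ι : Type*} [Fintype ι] {N : ℕ} (f : ι ↪ Fin N)
    {β : Type*} [AddCommMonoid β] (G : Fin N → β)
    (hG0 : ∀ j, j ∉ Finset.univ.image f → G j = 0) : ∑ j, G j = ∑ i, G (f i) := by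
  classical
  rw [← Finset.sum_subset (Finset.subset_univ (Finset.univ.image f)) (fun j _ hj => hG0 j hj)]
  rw [Finset.sum_image (fun a _ b _ h => f.injective h)]

lemma myIsCompact_convexHull {s : Set E} (hs : IsCompact s) :
    IsCompact (convexHull ℝ s) := by
  classical
  rcases s.eq_empty_or_nonempty with rfl | ⟨s₀, hs₀⟩
  · simp
  set N := Module.finrank ℝ E + 1 with hN
  set Φ : (Fin N → ℝ) × (Fin N → E) → E := fun p => ∑ i, p.1 i • p.2 i with hΦ
  have hΦcont : Continuous Φ := by
    apply continuous_finset_sum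
    intro i _
    exact ((continuous_apply i).comp continuous_fst).smul
      ((continuous_apply i).comp continuous_snd)
  have hT : IsCompact ((stdSimplex ℝ (Fin N)) ×ˢ (Set.univ.pi fun _ : Fin N => s)) :=
    (isCompact_stdSimplex _ _).prod (isCompact_univ_pi fun _ => hs)
  have himg : convexHull ℝ s
      = Φ '' ((stdSimplex ℝ (Fin N)) ×ˢ (Set.univ.pi fun _ : Fin N => s)) := by
    apply Set.Subset.antisymm
    · intro x hx
      obtain ⟨ι, hfin, z, wt, hrange, hai, hpos, hsum1, hsumx⟩ :=
        eq_pos_convex_span_of_mem_convexHull hx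
      have hcard : Fintype.card ι ≤ N := by
        refine hai.card_le_finrank_succ.trans ?_
        have := Submodule.finrank_le (vectorSpan ℝ (Set.range z))
        omega
      obtain ⟨f⟩ : Nonempty (ι ↪ Fin N) := by
        rw [Function.Embedding.nonempty_iff_card_le]
        simpa using hcard
      have hfinj : Function.Injective f := f.injective
      set lam : Fin N → ℝ := fun j => (Function.partialInv f j).elim 0 wt with hlam
      set vv : Fin N → E := fun j => (Function.partialInv f j).elim s₀ z with hvv
      have hnotmem : ∀ j : Fin N, j ∉ Finset.univ.image f → Function.partialInv f j = none := by
        intro j hj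
        have : ¬∃ a, f a = j := by
          intro ⟨a, ha⟩
          exact hj (Finset.mem_image.mpr ⟨a, Finset.mem_univ a, ha⟩)
        simp [Function.partialInv, this]
      refine ⟨(lam, vv), ⟨⟨fun j => ?_, ?_⟩, fun j _ => ?_⟩, ?_⟩
      · rcases h : Function.partialInv f j with _ | a
        · simp [hlam, h]
        · simp [hlam, h, (hpos a).le]
      · rw [sum_eq_sum_comp_of_eq_zero f lam (fun j hj => by simp [hlam, hnotmem j hj])]
        rw [← hsum1]
        apply Finset.sum_congr rfl
        intro i _
        simp [hlam, Function.partialInv_left hfinj]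
      · rcases h : Function.partialInv f j with _ | a
        · simpa [hvv, h] using hs₀
        · have : z a ∈ s := hrange ⟨a, rfl⟩
          simpa [hvv, h] using this
      · show ∑ j, lam j • vv j = x
        rw [sum_eq_sum_comp_of_eq_zero f (fun j => lam j • vv j)
          (fun j hj => by simp [hlam, hnotmem j hj])]
        rw [← hsumx]
        apply Finset.sum_congr rfl
        intro i _
        simp [hlam, hvv, Function.partialInv_left hfinj]
    · rintro x ⟨⟨lam, vv⟩, ⟨⟨hlam0, hlam1⟩, hvmem⟩, rfl⟩
      exact (convex_convexHull ℝ s).sum_mem (fun i _ => hlam0 i) hlam1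
        (fun i _ => subset_convexHull ℝ s (hvmem i (Set.mem_univ i)))
  rw [himg]
  exact hT.image hΦcont

open Matrix

theorem stmt11 (k n m : ℕ) (K : Set (Fin k → ℝ))
    (hKcone : ∀ (c : ℝ), 0 ≤ c → ∀ x ∈ K, c • x ∈ K)
    (hKclosed : IsClosed K) (hKconvex : Convex ℝ K)
    (hKpointed : K ∩ (-K) = {0})
    (hKne : K ≠ {0}) (hKuniv : K ≠ Set.univ)
    (L : Matrix (Fin k) (Fin n) ℝ) (A : Matrix (Fin m) (Fin n) ℝ) (b : Fin m → ℝ)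
    (U : Matrix (Fin k) (Fin m) ℝ)
    (hU : ¬ ∃ x : Fin n → ℝ, (∀ i, 0 ≤ x i) ∧
      (L - U * A) *ᵥ x ∈ (-K) ∧ (L - U * A) *ᵥ x ≠ 0)
    (w : Fin k → ℝ)
    (hw : (∃ x : Fin n → ℝ, (∀ i, 0 ≤ x i) ∧ (L - U * A) *ᵥ x = w) ∧
      ¬ ∃ w' : Fin k → ℝ, (∃ x : Fin n → ℝ, (∀ i, 0 ≤ x i) ∧ (L - U * A) *ᵥ x = w') ∧
        w - w' ∈ K ∧ w - w' ≠ 0) :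
    ∃ (l : Fin k → ℝ) (U' : Matrix (Fin k) (Fin m) ℝ) (v : Fin k → ℝ),
      ((∀ u ∈ K, u ≠ 0 → 0 < l ⬝ᵥ u) ∧ l ⬝ᵥ v = 0 ∧
        ∀ i, 0 ≤ ((L - U' * A)ᵀ *ᵥ l) i) ∧
      U *ᵥ b + w = U' *ᵥ b + v := by
  classical
  set M := L - U * A with hM
  set vfam : Option (Fin n) → (Fin k → ℝ) :=
    fun o => Option.elim o (-w) (fun i => fun j => M j i) with hvfam
  set D : Set (Fin k → ℝ) :=
    {x | ∃ c : Option (Fin n) → ℝ, (∀ i, 0 ≤ c i) ∧ x = ∑ i, c i • vfam i} with hD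
  have hmulVec : ∀ x : Fin n → ℝ, M *ᵥ x = ∑ i, x i • (fun j => M j i) := by
    intro x
    funext j
    rw [Finset.sum_apply]
    simp [Matrix.mulVec, dotProduct, mul_comm]
  have hmemD : ∀ (x : Fin n → ℝ), (∀ i, 0 ≤ x i) → ∀ t : ℝ, 0 ≤ t →
      (M *ᵥ x - t • w) ∈ D := by
    intro x hx t ht
    refine ⟨fun o => Option.elim o t x, fun o => by cases o with
      | none => exact ht
      | some i => exact hx i, ?_⟩
    rw [Fintype.sum_option]
    simp only [hvfam, Option.elim]
    rw [← hmulVec x, smul_neg]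
    abel
  have hDclosed : IsClosed D := by
    have := isClosed_coneCombo vfam Finset.univ
    simpa [hD] using this
  have hDconvex : Convex ℝ D := by
    rintro x ⟨cx, hcx, rfl⟩ y ⟨cy, hcy, rfl⟩ a b' ha hb hab
    refine ⟨fun i => a * cx i + b' * cy i,
      fun i => add_nonneg (mul_nonneg ha (hcx i)) (mul_nonneg hb (hcy i)), ?_⟩
    rw [Finset.smul_sum, Finset.smul_sum, ← Finset.sum_add_distrib]
    apply Finset.sum_congr rfl
    intro i _
    rw [add_smul, smul_smul, smul_smul]
  have hscaleD : ∀ d ∈ D, ∀ t : ℝ, 0 ≤ t → t • d ∈ D := by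
    rintro d ⟨c, hc, rfl⟩ t ht
    refine ⟨fun i => t * c i, fun i => mul_nonneg ht (hc i), ?_⟩
    rw [Finset.smul_sum]
    apply Finset.sum_congr rfl
    intro i _
    rw [smul_smul]
  have h0K : (0 : Fin k → ℝ) ∈ K := by
    have : (0 : Fin k → ℝ) ∈ K ∩ (-K) := by rw [hKpointed]; rfl
    exact this.1
  have hnegKconv : Convex ℝ (-K) := hKconvex.neg
  have hnegKcone : ∀ c : ℝ, 0 ≤ c → ∀ x ∈ -K, c • x ∈ -K := by
    intro c hc x hx
    rw [Set.mem_neg] at hx ⊢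
    rw [← smul_neg]
    exact hKcone c hc _ hx
  have haddnegK : ∀ u ∈ -K, ∀ u' ∈ -K, u + u' ∈ -K := by
    intro u hu u' hu'
    have h2 : ((1:ℝ)/2) • u + ((1:ℝ)/2) • u' ∈ -K :=
      hnegKconv hu hu' (by norm_num) (by norm_num) (by norm_num)
    have h3 := hnegKcone 2 (by norm_num) _ h2
    have h4 : (2:ℝ) • (((1:ℝ)/2) • u + ((1:ℝ)/2) • u') = u + u' := by module
    rwa [h4] at h3
  have hsumnegK : ∀ {ι : Type} (t : Finset ι) (lam : ι → ℝ) (z : ι → Fin k → ℝ),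
      (∀ i ∈ t, 0 ≤ lam i) → (∀ i ∈ t, z i ∈ -K) → ∑ i ∈ t, lam i • z i ∈ -K := by
    intro ι t
    induction t using Finset.induction with
    | empty =>
      intro lam z _ _
      simp only [Finset.sum_empty]
      rw [Set.mem_neg, neg_zero]
      exact h0K
    | insert a s hnot ih =>
      intro lam z h1 h2
      rw [Finset.sum_insert hnot]
      refine haddnegK _ (hnegKcone _ (h1 a (Finset.mem_insert_self a s)) _
        (h2 a (Finset.mem_insert_self a s))) _
        (ih lam z (fun i hi => h1 i (Finset.mem_insert_of_mem hi))
          (fun i hi => h2 i (Finset.mem_insert_of_mem hi)))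
  set Q : Set (Fin k → ℝ) := convexHull ℝ ((-K) ∩ Metric.sphere 0 1) with hQ
  have hQK : Q ⊆ -K := convexHull_min Set.inter_subset_left hnegKconv
  have h0Q : (0 : Fin k → ℝ) ∉ Q := by
    intro h0
    rw [hQ, mem_convexHull_iff_exists_fintype] at h0
    obtain ⟨ι, hfin, lam, z, hlam0, hlam1, hzmem, hzsum⟩ := h0
    have hex : ∃ j, lam j ≠ 0 := by
      by_contra hall
      push_neg at hall
      rw [Finset.sum_congr rfl (fun i _ => hall i)] at hlam1
      simp at hlam1
    obtain ⟨j, hj⟩ := hex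
    have hjpos : 0 < lam j := lt_of_le_of_ne (hlam0 j) (Ne.symm hj)
    have hjz : lam j • z j ∈ -K := hnegKcone _ hjpos.le _ (hzmem j).1
    have hrest : ∑ i ∈ Finset.univ.erase j, lam i • z i ∈ -K :=
      hsumnegK _ _ _ (fun i _ => hlam0 i) (fun i _ => (hzmem i).1)
    have heq : lam j • z j = -∑ i ∈ Finset.univ.erase j, lam i • z i := by
      have h5 := Finset.add_sum_erase Finset.univ (fun i => lam i • z i) (Finset.mem_univ j)
      rw [hzsum] at h5
      rw [eq_neg_iff_add_eq_zero, h5]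
    have hjK : lam j • z j ∈ K := by
      rw [heq, ← Set.mem_neg]
      simpa using hrest
    have : lam j • z j ∈ K ∩ (-K) := ⟨hjK, hjz⟩
    rw [hKpointed] at this
    have hz0 : z j = 0 := by
      rcases smul_eq_zero.mp this with h | h
      · exact absurd h hj
      · exact h
    have := (hzmem j).2
    rw [hz0, mem_sphere_zero_iff_norm] at this
    simp at this
  have hdisjoint : Disjoint D Q := by
    rw [Set.disjoint_left]
    rintro q hqD hqQ
    have hqK : q ∈ -K := hQK hqQ
    have hq0 : q ≠ 0 := fun h => h0Q (h ▸ hqQ)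
    obtain ⟨c, hc, hqrep⟩ := hqD
    set x := fun i => c (some i) with hx
    set t := c none with htdef
    have hqeq : q = M *ᵥ x - t • w := by
      rw [hqrep, Fintype.sum_option]
      simp only [hvfam, Option.elim]
      rw [← hmulVec x, smul_neg]
      abel
    rcases eq_or_lt_of_le (hc none) with ht0 | htpos
    · apply hU
      have hqx : q = M *ᵥ x := by
        have ht0' : t = 0 := htdef.trans ht0.symm
        rw [hqeq, ht0', zero_smul, sub_zero]
      exact ⟨x, fun i => hc (some i), by rw [← hqx]; exact hqK, by rw [← hqx]; exact hq0⟩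
    · apply hw.2
      have htpos' : (0:ℝ) < t := htpos
      have hq' : t⁻¹ • q ∈ -K := hnegKcone _ (inv_nonneg.mpr htpos'.le) _ hqK
      have hcalc : w - M *ᵥ (t⁻¹ • x) = -(t⁻¹ • q) := by
        rw [hqeq, Matrix.mulVec_smul, smul_sub, smul_smul, inv_mul_cancel₀ (ne_of_gt htpos'),
          one_smul]
        abel
      refine ⟨M *ᵥ (t⁻¹ • x), ⟨t⁻¹ • x, fun i => mul_nonneg (inv_nonneg.mpr htpos'.le)
        (hc (some i)), rfl⟩, ?_, ?_⟩
      · rw [hcalc, ← Set.mem_neg]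
        simpa using hq'
      · rw [hcalc]
        exact neg_ne_zero.mpr (smul_ne_zero (inv_ne_zero (ne_of_gt htpos')) hq0)
  have hQcompact : IsCompact Q := by
    rw [hQ]
    apply myIsCompact_convexHull
    apply IsCompact.inter_left (isCompact_sphere 0 1)
    exact hKclosed.preimage continuous_neg
  have hQconv : Convex ℝ Q := hQ ▸ convex_convexHull ℝ _
  obtain ⟨f, a, b', hfD, hab, hfQ⟩ :=
    geometric_hahn_banach_closed_compact hDconvex hDclosed hQconv hQcompact hdisjoint
  have h0D : (0 : Fin k → ℝ) ∈ D := ⟨fun _ => 0, fun _ => le_rfl, by simp⟩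
  have ha0 : (0:ℝ) < a := by simpa using hfD 0 h0D
  have hfDle : ∀ d ∈ D, f d ≤ 0 := by
    intro d hd
    by_contra hpos
    push_neg at hpos
    have h1 := hfD (((a+1)/f d) • d) (hscaleD d hd _ (div_nonneg (by linarith) hpos.le))
    rw [_root_.map_smul, smul_eq_mul, div_mul_cancel₀ _ (ne_of_gt hpos)] at h1
    linarith
  have hfQpos : ∀ q ∈ Q, 0 < f q := fun q hq => lt_trans (lt_trans ha0 hab) (hfQ q hq)
  have hfKneg : ∀ u ∈ K, u ≠ 0 → f u < 0 := by
    intro u hu hu0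
    have hnorm : (0:ℝ) < ‖u‖ := norm_pos_iff.mpr hu0
    have hmem : (‖u‖⁻¹ • (-u)) ∈ (-K) ∩ Metric.sphere 0 1 := by
      constructor
      · exact hnegKcone _ (inv_nonneg.mpr hnorm.le) _ (Set.neg_mem_neg.mpr hu)
      · rw [mem_sphere_zero_iff_norm, norm_smul, norm_neg, norm_inv, norm_norm,
          inv_mul_cancel₀ (ne_of_gt hnorm)]
    have hQmem : (‖u‖⁻¹ • (-u)) ∈ Q := hQ ▸ subset_convexHull ℝ _ hmem
    have hp := hfQpos _ hQmem
    rw [_root_.map_smul, smul_eq_mul, map_neg] at hp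
    have h2 : (0:ℝ) < ‖u‖⁻¹ := inv_pos.mpr hnorm
    nlinarith
  set l : Fin k → ℝ := fun i => -(f (fun j => if i = j then (1:ℝ) else 0)) with hl
  have hfl : ∀ x : Fin k → ℝ, l ⬝ᵥ x = - f x := by
    intro x
    have hx : f x = ∑ i, x i * f (fun j => if i = j then (1:ℝ) else 0) := by
      conv_lhs => rw [pi_eq_sum_univ x]
      rw [map_sum]
      apply Finset.sum_congr rfl
      intro i _
      rw [_root_.map_smul, smul_eq_mul]
    rw [dotProduct, hx, ← Finset.sum_neg_distrib]
    apply Finset.sum_congr rfl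
    intro i _
    rw [hl]
    ring
  obtain ⟨x₀, hx₀, hx₀w⟩ := hw.1
  have hwD : w ∈ D := by
    have hh := hmemD x₀ hx₀ 0 le_rfl
    rwa [zero_smul, sub_zero, hx₀w] at hh
  have hnwD : -w ∈ D := by
    have hh := hmemD 0 (fun i => le_rfl) 1 zero_le_one
    rwa [Matrix.mulVec_zero, one_smul, zero_sub] at hh
  have hfw : f w = 0 := by
    have h1 := hfDle w hwD
    have h2 := hfDle _ hnwD
    rw [map_neg] at h2
    linarith
  refine ⟨l, U, w, ⟨?_, ?_, ?_⟩, rfl⟩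
  · intro u hu hu0
    rw [hfl]
    linarith [hfKneg u hu hu0]
  · rw [hfl, hfw, neg_zero]
  · intro i
    have hcol : (fun j => M j i) ∈ D := by
      have hsingle : ∀ i' : Fin n, 0 ≤ Pi.single (M := fun _ => ℝ) i 1 i' := by
        intro i'
        rcases eq_or_ne i' i with rfl | h
        · simp
        · simp [Pi.single_apply, h]
      have hh := hmemD (Pi.single i 1) hsingle 0 le_rfl
      rw [zero_smul, sub_zero, Matrix.mulVec_single_one] at hh
      exact hh
    have hle := hfDle _ hcol
    have hrw : (Mᵀ *ᵥ l) i = l ⬝ᵥ (fun j => M j i) := by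
      simp [Matrix.mulVec, dotProduct, Matrix.transpose_apply, mul_comm]
    rw [hrw, hfl]
    linarith
end

section
/- Converse duality for the Lagrange-type dual: if (λ̄, z̄, v̄) ∈ ℬ^L = {(λ, z, v) ∈ K*⁰ × ℝ^m × ℝ^k : λᵀv − zᵀb ≤ 0, Lᵀλ − Aᵀz ∈ ℝ^n_+} is an efficient (maximal) solution to maximizing v over ℬ^L with respect to K, then there exists x̄ ∈ 𝒜 = {x ∈ ℝ^n_+ : Ax = b}, efficient for minimizing Lx over 𝒜 with respect to K, such that Lx̄ = v̄. -/
open Matrix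

lemma cone_cara {D : Type*} [AddCommGroup D] [Module ℝ D] {n : ℕ}
    (a : Fin n → D) (x : Fin n → ℝ) (hx : ∀ i, 0 ≤ x i) :
    ∃ (S : Finset (Fin n)) (y : Fin n → ℝ),
      LinearIndependent ℝ (fun i : S => a i) ∧ (∀ i, 0 ≤ y i) ∧
      (∀ i ∉ S, y i = 0) ∧ ∑ i, y i • a i = ∑ i, x i • a i := by
  classical
  obtain ⟨N, hN⟩ : ∃ N, (Finset.univ.filter fun i => x i ≠ 0).card ≤ N := ⟨_, le_rfl⟩
  induction N generalizing x with
  | zero =>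
    refine ⟨∅, x, ?_, hx, ?_, rfl⟩
    · have : IsEmpty ((∅ : Finset (Fin n)) : Type) :=
        ⟨fun i => absurd i.2 (Finset.notMem_empty _)⟩
      exact linearIndependent_empty_type
    · intro i _
      by_contra h
      have : i ∈ Finset.univ.filter fun i => x i ≠ 0 := by simp [h]
      have := Finset.card_pos.mpr ⟨i, this⟩
      omega
  | succ N ih =>
    set T := Finset.univ.filter fun i => x i ≠ 0 with hT
    by_cases hli : LinearIndependent ℝ (fun i : T => a i)
    · exact ⟨T, x, hli, hx, fun i hi => by simpa [hT] using hi, rfl⟩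
    have key : ∀ c : Fin n → ℝ, (∀ i, c i ≠ 0 → i ∈ T) → (∑ i, c i • a i = 0) →
        (∃ i, 0 < c i) →
        ∃ (S : Finset (Fin n)) (y : Fin n → ℝ),
          LinearIndependent ℝ (fun i : S => a i) ∧ (∀ i, 0 ≤ y i) ∧
          (∀ i ∉ S, y i = 0) ∧ ∑ i, y i • a i = ∑ i, x i • a i := by
      rintro c hcsupp hcsum ⟨i₂, hi₂⟩
      set P := T.filter (fun i => 0 < c i) with hP
      have hPne : P.Nonempty := ⟨i₂, by
        simp only [hP, Finset.mem_filter]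
        exact ⟨hcsupp i₂ (ne_of_gt hi₂), hi₂⟩⟩
      obtain ⟨i₀, hi₀P, hi₀min⟩ := P.exists_min_image (fun i => x i / c i) hPne
      have hci₀ : 0 < c i₀ := (Finset.mem_filter.mp hi₀P).2
      set ρ := x i₀ / c i₀ with hρ
      have hρ0 : 0 ≤ ρ := div_nonneg (hx i₀) hci₀.le
      set x' : Fin n → ℝ := fun i => x i - ρ * c i with hx'def
      have hx' : ∀ i, 0 ≤ x' i := by
        intro i
        rcases le_or_gt (c i) 0 with h | h
        · have : ρ * c i ≤ 0 := mul_nonpos_of_nonneg_of_nonpos hρ0 h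
          have := hx i
          simp only [hx'def]; linarith
        · have hiP : i ∈ P := Finset.mem_filter.mpr ⟨hcsupp i (ne_of_gt h), h⟩
          have := hi₀min i hiP
          have : ρ * c i ≤ x i := by
            calc ρ * c i ≤ (x i / c i) * c i := by
                  apply mul_le_mul_of_nonneg_right (hi₀min i hiP) h.le
              _ = x i := div_mul_cancel₀ _ (ne_of_gt h)
          simp only [hx'def]; linarith
      have hsum' : ∑ i, x' i • a i = ∑ i, x i • a i := by
        have h0 : ∑ i : Fin n, (ρ * c i) • a i = (0 : D) := by
          simp only [mul_smul, ← Finset.smul_sum, hcsum, smul_zero]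
        simp only [hx'def, sub_smul, Finset.sum_sub_distrib, h0, sub_zero]
      have hsupp' : (Finset.univ.filter fun i => x' i ≠ 0) ⊆ T.erase i₀ := by
        intro i hi
        simp only [Finset.mem_filter, Finset.mem_univ, true_and] at hi
        refine Finset.mem_erase.mpr ⟨?_, ?_⟩
        · rintro rfl
          apply hi
          simp only [hx'def, hρ]
          field_simp
          ring
        · by_contra h
          have hx0 : x i = 0 := by
            by_contra h'
            exact h (Finset.mem_filter.mpr ⟨Finset.mem_univ _, h'⟩)
          have hc0 : c i = 0 := by
            by_contra h'
            exact h (hcsupp i h')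
          apply hi
          simp [hx'def, hx0, hc0]
      have hcard : (Finset.univ.filter fun i => x' i ≠ 0).card ≤ N := by
        have h1 := Finset.card_le_card hsupp'
        have h2 : i₀ ∈ T := hcsupp i₀ (ne_of_gt hci₀)
        have h3 := Finset.card_erase_of_mem h2
        omega
      obtain ⟨S, y, h1, h2, h3, h4⟩ := ih x' hx' hcard
      exact ⟨S, y, h1, h2, h3, h4.trans hsum'⟩
    obtain ⟨g, hgsum, i₁, hign⟩ := Fintype.not_linearIndependent_iff.mp hli
    set c : Fin n → ℝ := fun i => if h : i ∈ T then g ⟨i, h⟩ else 0 with hc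
    have hcsupp : ∀ i, c i ≠ 0 → i ∈ T := by
      intro i hi
      by_contra h
      exact hi (by simp [hc, h])
    have hcsum : ∑ i, c i • a i = 0 := by
      rw [← hgsum]
      calc ∑ i : Fin n, c i • a i
          = ∑ i ∈ T, c i • a i := by
            refine (Finset.sum_subset (Finset.subset_univ T) ?_).symm
            intro i _ hi; simp [hc, hi]
        _ = ∑ i : T, c i.1 • a i.1 := (Finset.sum_coe_sort T _).symm
        _ = ∑ i : T, g i • a i.1 := by
            apply Finset.sum_congr rfl
            intro i _
            congr 1
            simp [hc]
    have hc₁ : c i₁ ≠ 0 := by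
      simpa [hc, i₁.2] using hign
    rcases lt_or_gt_of_ne hc₁ with h | h
    · refine key (fun i => -c i) (fun i hi => hcsupp i (by simpa using hi)) ?_ ⟨i₁, by show (0:ℝ) < -c ↑i₁; linarith⟩
      simp only [neg_smul, Finset.sum_neg_distrib, hcsum, neg_zero]
    · exact key c hcsupp hcsum ⟨i₁, h⟩

lemma cone_isClosed {D : Type*} [Fintype D] {n : ℕ} (M : Matrix D (Fin n) ℝ) :
    IsClosed {y : D → ℝ | ∃ x : Fin n → ℝ, (∀ i, 0 ≤ x i) ∧ M *ᵥ x = y} := by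
  classical
  have hmv : ∀ x : Fin n → ℝ, M *ᵥ x = ∑ i, x i • Mᵀ i := by
    intro x; ext j
    simp [mulVec, dotProduct, Finset.sum_apply, transpose_apply, mul_comm]
  have hset : {y : D → ℝ | ∃ x, (∀ i, 0 ≤ x i) ∧ M *ᵥ x = y} =
      ⋃ (S : Finset (Fin n)) (_ : LinearIndependent ℝ fun i : S => Mᵀ i.1),
        (fun y : S → ℝ => ∑ i : S, y i • Mᵀ i.1) '' {y | ∀ i, 0 ≤ y i} := by
    ext v
    simp only [Set.mem_setOf_eq, Set.mem_iUnion, Set.mem_image]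
    constructor
    · rintro ⟨x, hx, rfl⟩
      obtain ⟨S, y, h1, h2, h3, h4⟩ := cone_cara (fun i => Mᵀ i) x hx
      refine ⟨S, h1, fun i => y i.1, fun i => h2 i.1, ?_⟩
      rw [hmv, ← h4]
      calc ∑ i : S, y i.1 • Mᵀ i.1
          = ∑ i ∈ S, y i • Mᵀ i := Finset.sum_coe_sort S (fun i => y i • Mᵀ i)
        _ = ∑ i : Fin n, y i • Mᵀ i :=
            Finset.sum_subset (Finset.subset_univ S) fun i _ hi => by simp [h3 i hi]
    · rintro ⟨S, hS, y, hy, rfl⟩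
      set x : Fin n → ℝ := fun i => if h : i ∈ S then y ⟨i, h⟩ else 0 with hxdef
      refine ⟨x, fun i => ?_, ?_⟩
      · simp only [hxdef]
        split
        · exact hy _
        · exact le_refl 0
      · rw [hmv]
        calc ∑ i : Fin n, x i • Mᵀ i
            = ∑ i ∈ S, x i • Mᵀ i := by
              refine (Finset.sum_subset (Finset.subset_univ S) ?_).symm
              intro i _ hi; simp [hxdef, hi]
          _ = ∑ i : S, x i.1 • Mᵀ i.1 := (Finset.sum_coe_sort _ _).symm
          _ = ∑ i : S, y i • Mᵀ i.1 := by
              apply Finset.sum_congr rfl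
              intro i _
              congr 1
              simp [hxdef]
  rw [hset]
  apply isClosed_iUnion_of_finite
  intro S
  rw [Set.iUnion_eq_if]
  split_ifs with hS
  · set f := LinearMap.lsum ℝ (fun _ : S => ℝ) ℕ (fun i => LinearMap.id.smulRight (Mᵀ i.1)) with hf
    have hfa : ∀ y : S → ℝ, f y = ∑ i : S, y i • Mᵀ i.1 := by
      intro y
      simp [hf, LinearMap.lsum_apply, LinearMap.smulRight_apply, LinearMap.id_apply,
        LinearMap.coe_comp, LinearMap.coe_sum, Finset.sum_apply, LinearMap.proj_apply,
        Function.comp]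
    have hker : LinearMap.ker f = ⊥ := Fintype.linearIndependent_iff'.mp hS
    have hemb := LinearMap.isClosedEmbedding_of_injective (𝕜 := ℝ) (E := S → ℝ)
      (F := D → ℝ) hker
    have hpos : IsClosed {y : S → ℝ | ∀ i, 0 ≤ y i} := by
      have : {y : S → ℝ | ∀ i, 0 ≤ y i} = ⋂ i, {y | 0 ≤ y i} := by ext; simp
      rw [this]
      exact isClosed_iInter fun i => isClosed_le continuous_const (continuous_apply i)
    have : (fun y : S → ℝ => ∑ i : S, y i • Mᵀ i.1) = f := by
      ext y; rw [hfa]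
    rw [this]
    exact hemb.isClosedMap _ hpos
  · exact isClosed_empty

lemma farkas_s12 {D : Type*} [Fintype D] [DecidableEq D] {n : ℕ} (M : Matrix D (Fin n) ℝ)
    (c : D → ℝ) (h : ¬ ∃ x : Fin n → ℝ, (∀ i, 0 ≤ x i) ∧ M *ᵥ x = c) :
    ∃ y : D → ℝ, (∀ i, 0 ≤ (Mᵀ *ᵥ y) i) ∧ c ⬝ᵥ y < 0 := by
  classical
  set C : ConvexCone ℝ (EuclideanSpace ℝ D) :=
    { carrier := {y : EuclideanSpace ℝ D | ∃ x : Fin n → ℝ, (∀ i, 0 ≤ x i) ∧ M *ᵥ x = y}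
      smul_mem' := by
        rintro t ht y ⟨x, hx, hxy⟩
        exact ⟨t • x, fun i => mul_nonneg ht.le (hx i), by simp [M.mulVec_smul, hxy]⟩
      add_mem' := by
        rintro y ⟨x, hx, hxy⟩ y' ⟨x', hx', hxy'⟩
        exact ⟨x + x', fun i => add_nonneg (hx i) (hx' i), by simp [M.mulVec_add, hxy, hxy']⟩ } with hC
  have hne : (C : Set (EuclideanSpace ℝ D)).Nonempty :=
    ⟨0, 0, fun i => le_refl 0, M.mulVec_zero⟩
  have hcl : IsClosed (C : Set (EuclideanSpace ℝ D)) := (cone_isClosed M).preimage (PiLp.continuous_ofLp 2 _)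
  have hnm : WithLp.toLp 2 c ∉ C := h
  obtain ⟨y, hy1, hy2⟩ := ProperCone.hyperplane_separation'
    { toSubmodule := C.toPointedCone (show (0 : EuclideanSpace ℝ D) ∈ C from
        ⟨0, fun _ => le_refl 0, by simp⟩), isClosed' := hcl } hnm
  refine ⟨y.ofLp, fun i => ?_, ?_⟩
  · have hmem : WithLp.toLp 2 (M *ᵥ Pi.single i 1) ∈ C :=
      ⟨Pi.single i 1, fun j => by
        rcases eq_or_ne j i with rfl | hji
        · simp
        · simp [Pi.single_apply, hji], rfl⟩
    have h2 := hy1 _ hmem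
    have e : (Mᵀ *ᵥ y) i = ∑ j, M j i * y j := by
      simp [mulVec, dotProduct, transpose_apply]
    rw [e]
    simpa [PiLp.inner_apply, RCLike.inner_apply, conj_trivial, mulVec, dotProduct,
      Pi.single_apply, mul_comm] using h2
  · have : c ⬝ᵥ y = ∑ i, y i * c i := by
      simp [dotProduct, mul_comm]
    rw [this]
    simpa [PiLp.inner_apply, RCLike.inner_apply, conj_trivial] using hy2

lemma perturb {k : ℕ} (K : Set (Fin k → ℝ))
    (hKcone : ∀ (c : ℝ), 0 ≤ c → ∀ x ∈ K, c • x ∈ K) (hKclosed : IsClosed K)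
    (lbar : Fin k → ℝ) (hl : ∀ u ∈ K, u ≠ 0 → 0 < lbar ⬝ᵥ u) (w : Fin k → ℝ) :
    ∃ t : ℝ, 0 < t ∧ ∀ u ∈ K, u ≠ 0 → 0 < (lbar + t • w) ⬝ᵥ u := by
  classical
  set S := K ∩ Metric.sphere 0 1 with hSdef
  have cont : ∀ v : Fin k → ℝ, Continuous fun u : Fin k → ℝ => v ⬝ᵥ u := fun v =>
    continuous_finset_sum _ fun i _ => continuous_const.mul (continuous_apply i)
  have hnorm : ∀ u ∈ K, u ≠ 0 → (‖u‖⁻¹ • u) ∈ S := by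
    intro u hu hun
    have hn : 0 < ‖u‖ := norm_pos_iff.mpr hun
    refine ⟨hKcone _ (inv_nonneg.mpr hn.le) u hu, ?_⟩
    rw [mem_sphere_zero_iff_norm, norm_smul, norm_inv, norm_norm]
    field_simp
  by_cases hS : S.Nonempty
  · have hScompact : IsCompact S := by
      refine (isCompact_closedBall (0 : Fin k → ℝ) 1).of_isClosed_subset
        (hKclosed.inter Metric.isClosed_sphere) ?_
      exact fun u hu => Metric.sphere_subset_closedBall hu.2
    obtain ⟨u₁, hu₁S, hmin⟩ := hScompact.exists_isMinOn hS (cont lbar).continuousOn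
    obtain ⟨u₂, hu₂S, hmax2⟩ := hScompact.exists_isMaxOn hS (cont w).abs.continuousOn
    set δ := lbar ⬝ᵥ u₁ with hδ
    set Mg := |w ⬝ᵥ u₂| with hMg
    have hu₁ne : u₁ ≠ 0 := by
      intro h
      have := hu₁S.2
      rw [h, mem_sphere_zero_iff_norm, norm_zero] at this
      norm_num at this
    have hδ0 : 0 < δ := hl u₁ hu₁S.1 hu₁ne
    have hMg0 : 0 ≤ Mg := abs_nonneg _
    refine ⟨δ / (Mg + 1), by positivity, ?_⟩
    intro u hu hun
    have hn : 0 < ‖u‖ := norm_pos_iff.mpr hun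
    have hu'S : (‖u‖⁻¹ • u) ∈ S := hnorm u hu hun
    set u' := ‖u‖⁻¹ • u with hu'
    have hpos' : 0 < (lbar + (δ / (Mg + 1)) • w) ⬝ᵥ u' := by
      have h1 : δ ≤ lbar ⬝ᵥ u' := hmin hu'S
      have h2 : |w ⬝ᵥ u'| ≤ Mg := hmax2 hu'S
      have h3 : -Mg ≤ w ⬝ᵥ u' := neg_le_of_abs_le h2
      have h4 : (δ / (Mg + 1)) * Mg < δ := by
        rw [div_mul_eq_mul_div, div_lt_iff₀ (by positivity)]
        nlinarith
      have h5 : (δ / (Mg + 1)) * (-Mg) ≤ (δ / (Mg + 1)) * (w ⬝ᵥ u') :=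
        mul_le_mul_of_nonneg_left h3 (by positivity)
      rw [add_dotProduct, smul_dotProduct, smul_eq_mul]
      nlinarith
    have : (lbar + (δ / (Mg + 1)) • w) ⬝ᵥ u = ‖u‖ * ((lbar + (δ / (Mg + 1)) • w) ⬝ᵥ u') := by
      rw [hu', dotProduct_smul, smul_eq_mul, ← mul_assoc, mul_inv_cancel₀ (ne_of_gt hn), one_mul]
    rw [this]
    exact mul_pos hn hpos'
  · refine ⟨1, one_pos, fun u hu hun => absurd ⟨_, hnorm u hu hun⟩ hS⟩

theorem stmt12 (k n m : ℕ) (K : Set (Fin k → ℝ))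
    (hKcone : ∀ (c : ℝ), 0 ≤ c → ∀ x ∈ K, c • x ∈ K)
    (hKclosed : IsClosed K) (hKconvex : Convex ℝ K)
    (hKpointed : K ∩ (-K) = {0})
    (hKne : K ≠ {0}) (hKuniv : K ≠ Set.univ)
    (L : Matrix (Fin k) (Fin n) ℝ) (A : Matrix (Fin m) (Fin n) ℝ) (b : Fin m → ℝ)
    (lbar : Fin k → ℝ) (zbar : Fin m → ℝ) (vbar : Fin k → ℝ)
    (hfeas : (∀ u ∈ K, u ≠ 0 → 0 < lbar ⬝ᵥ u) ∧ lbar ⬝ᵥ vbar - zbar ⬝ᵥ b ≤ 0 ∧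
      ∀ i, 0 ≤ (Lᵀ *ᵥ lbar - Aᵀ *ᵥ zbar) i)
    (hmax : ¬ ∃ (l : Fin k → ℝ) (z : Fin m → ℝ) (v : Fin k → ℝ),
      ((∀ u ∈ K, u ≠ 0 → 0 < l ⬝ᵥ u) ∧ l ⬝ᵥ v - z ⬝ᵥ b ≤ 0 ∧
        ∀ i, 0 ≤ (Lᵀ *ᵥ l - Aᵀ *ᵥ z) i) ∧
      v - vbar ∈ K ∧ v - vbar ≠ 0) :
    ∃ xbar : Fin n → ℝ, ((∀ i, 0 ≤ xbar i) ∧ A *ᵥ xbar = b) ∧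
      (¬ ∃ x : Fin n → ℝ, ((∀ i, 0 ≤ x i) ∧ A *ᵥ x = b) ∧
        L *ᵥ xbar - L *ᵥ x ∈ K ∧ L *ᵥ xbar - L *ᵥ x ≠ 0) ∧
      L *ᵥ xbar = vbar := by
  classical
  obtain ⟨hl, hle, hge⟩ := hfeas
  have h0K : (0 : Fin k → ℝ) ∈ K := by
    have : (0 : Fin k → ℝ) ∈ K ∩ (-K) := by rw [hKpointed]; rfl
    exact this.1
  obtain ⟨u₀, hu₀K, hu₀⟩ : ∃ u ∈ K, u ≠ 0 := by
    by_contra h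
    push_neg at h
    exact hKne (Set.eq_singleton_iff_unique_mem.mpr ⟨h0K, fun u hu => h u hu⟩)
  -- bump argument
  have bump : ∀ l : Fin k → ℝ, ∀ z : Fin m → ℝ, (∀ u ∈ K, u ≠ 0 → 0 < l ⬝ᵥ u) →
      (∀ i, 0 ≤ (Lᵀ *ᵥ l - Aᵀ *ᵥ z) i) → l ⬝ᵥ vbar - z ⬝ᵥ b < 0 → False := by
    intro l z hlpos hgez hlt
    set ε := (z ⬝ᵥ b - l ⬝ᵥ vbar) / (l ⬝ᵥ u₀) with hε
    have hlu₀ : 0 < l ⬝ᵥ u₀ := hlpos u₀ hu₀K hu₀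
    have hε0 : 0 < ε := div_pos (by linarith) hlu₀
    apply hmax
    have hcancel : vbar + ε • u₀ - vbar = ε • u₀ := add_sub_cancel_left vbar (ε • u₀)
    refine ⟨l, z, vbar + ε • u₀, ⟨hlpos, ?_, hgez⟩, ?_, ?_⟩
    · have h1 : l ⬝ᵥ (vbar + ε • u₀) = l ⬝ᵥ vbar + ε * (l ⬝ᵥ u₀) := by
        rw [dotProduct_add, dotProduct_smul, smul_eq_mul]
      have h2 : ε * (l ⬝ᵥ u₀) = z ⬝ᵥ b - l ⬝ᵥ vbar := div_mul_cancel₀ _ (ne_of_gt hlu₀)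
      rw [h1]; linarith
    · rw [hcancel]; exact hKcone ε hε0.le u₀ hu₀K
    · rw [hcancel]; exact smul_ne_zero (ne_of_gt hε0) hu₀
  have heq : lbar ⬝ᵥ vbar = zbar ⬝ᵥ b := by
    have hnot : ¬ (lbar ⬝ᵥ vbar - zbar ⬝ᵥ b < 0) := fun hc => bump lbar zbar hl hge hc
    push_neg at hnot
    linarith
  -- existence via Farkas
  have hex : ∃ x : Fin n → ℝ, (∀ i, 0 ≤ x i) ∧ A *ᵥ x = b ∧ L *ᵥ x = vbar := by
    by_contra hcon
    push_neg at hcon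
    set M : Matrix (Fin m ⊕ Fin k) (Fin n) ℝ := Matrix.of (Sum.elim A L) with hM
    set cvec : Fin m ⊕ Fin k → ℝ := Sum.elim b vbar with hcvec
    have hno : ¬ ∃ x, (∀ i, 0 ≤ x i) ∧ M *ᵥ x = cvec := by
      rintro ⟨x, hx, hMx⟩
      have hA : A *ᵥ x = b := by
        ext j; have := congrFun hMx (Sum.inl j)
        simp [hM, hcvec, Matrix.mulVec] at this ⊢; exact this
      have hL : L *ᵥ x = vbar := by
        ext j; have := congrFun hMx (Sum.inr j)
        simp [hM, hcvec, Matrix.mulVec] at this ⊢; exact this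
      exact hcon x hx hA hL
    obtain ⟨y, hy1, hy2⟩ := farkas_s12 M cvec hno
    set y₁ : Fin m → ℝ := fun j => y (Sum.inl j) with hy₁
    set y₂ : Fin k → ℝ := fun j => y (Sum.inr j) with hy₂
    have hyt : ∀ i, (Mᵀ *ᵥ y) i = (Aᵀ *ᵥ y₁) i + (Lᵀ *ᵥ y₂) i := by
      intro i
      simp [hM, Matrix.mulVec, dotProduct, Fintype.sum_sum_type, transpose_apply, hy₁, hy₂]
      rfl
    have hcy : cvec ⬝ᵥ y = b ⬝ᵥ y₁ + vbar ⬝ᵥ y₂ := by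
      simp [hcvec, dotProduct, Fintype.sum_sum_type, hy₁, hy₂]
    obtain ⟨t, ht0, htpos⟩ := perturb K hKcone hKclosed lbar hl y₂
    apply bump (lbar + t • y₂) (zbar - t • y₁) htpos
    · intro i
      have e : (Lᵀ *ᵥ (lbar + t • y₂) - Aᵀ *ᵥ (zbar - t • y₁)) i
          = (Lᵀ *ᵥ lbar - Aᵀ *ᵥ zbar) i + t * ((Aᵀ *ᵥ y₁) i + (Lᵀ *ᵥ y₂) i) := by
        simp only [Matrix.mulVec_add, Matrix.mulVec_smul, Matrix.mulVec_sub, Pi.add_apply,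
          Pi.sub_apply, Pi.smul_apply, smul_eq_mul]
        ring
      have h4 : 0 ≤ (Aᵀ *ᵥ y₁) i + (Lᵀ *ᵥ y₂) i := by rw [← hyt i]; exact hy1 i
      rw [e]
      have := mul_nonneg ht0.le h4
      linarith [hge i]
    · have e : (lbar + t • y₂) ⬝ᵥ vbar - (zbar - t • y₁) ⬝ᵥ b
          = (lbar ⬝ᵥ vbar - zbar ⬝ᵥ b) + t * (y₂ ⬝ᵥ vbar + y₁ ⬝ᵥ b) := by
        rw [add_dotProduct, sub_dotProduct, smul_dotProduct, smul_dotProduct, smul_eq_mul,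
          smul_eq_mul]
        ring
      have hsum : y₂ ⬝ᵥ vbar + y₁ ⬝ᵥ b < 0 := by
        have : b ⬝ᵥ y₁ + vbar ⬝ᵥ y₂ < 0 := by rw [← hcy]; exact hy2
        rw [dotProduct_comm y₂ vbar, dotProduct_comm y₁ b]; linarith
      rw [e, heq]
      have := mul_neg_of_pos_of_neg ht0 hsum
      linarith
  obtain ⟨xbar, hxpos, hAx, hLx⟩ := hex
  refine ⟨xbar, ⟨hxpos, hAx⟩, ?_, hLx⟩
  rintro ⟨x, ⟨hx, hAxx⟩, hKmem, hne0⟩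
  have h1 : 0 < lbar ⬝ᵥ (L *ᵥ xbar - L *ᵥ x) := hl _ hKmem hne0
  have h2 : zbar ⬝ᵥ b ≤ lbar ⬝ᵥ (L *ᵥ x) := by
    have hsum : 0 ≤ (Lᵀ *ᵥ lbar - Aᵀ *ᵥ zbar) ⬝ᵥ x :=
      Finset.sum_nonneg fun i _ => mul_nonneg (hge i) (hx i)
    have e1 : (Lᵀ *ᵥ lbar) ⬝ᵥ x = lbar ⬝ᵥ (L *ᵥ x) := by
      rw [Matrix.dotProduct_mulVec, Matrix.mulVec_transpose]
    have e2 : (Aᵀ *ᵥ zbar) ⬝ᵥ x = zbar ⬝ᵥ (A *ᵥ x) := by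
      rw [Matrix.dotProduct_mulVec, Matrix.mulVec_transpose]
    rw [sub_dotProduct, e1, e2, hAxx] at hsum
    linarith
  have h3 : lbar ⬝ᵥ (L *ᵥ xbar) = zbar ⬝ᵥ b := by rw [hLx]; exact heq
  rw [dotProduct_sub] at h1
  linarith
end

section
/- Let K ⊆ ℝ^k be a nontrivial pointed closed convex cone, 𝒜 = {x ∈ ℝ^n_+ : Ax = b} nonempty, and suppose {Lx : x ∈ ℝ^n_+, Ax = 0} ∩ (−K) = {0}. Then L(𝒜) + K is a closed convex set. -/
open Matrix Pointwise


section Cone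
variable {E : Type*} [NormedAddCommGroup E] [NormedSpace ℝ E]

/-- Carathéodory for cones. -/
lemma coneCarath {ι : Type*} [DecidableEq ι] (v : ι → E) (s : Finset ι) :
    ∀ c : ι → ℝ, (∀ i, 0 ≤ c i) →
    ∃ t : Finset ι, t ⊆ s ∧ LinearIndependent ℝ (fun i : ↥t => v ↑i) ∧
      ∃ d : ι → ℝ, (∀ i, 0 ≤ d i) ∧ ∑ i ∈ t, d i • v i = ∑ i ∈ s, c i • v i := by
  induction s using Finset.strongInduction with
  | _ s ih =>
    intro c hc
    by_cases hli : LinearIndependent ℝ (fun i : ↥s => v ↑i)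
    · exact ⟨s, Finset.Subset.refl s, hli, c, hc, rfl⟩
    · obtain ⟨g, hg0, i0, hi0⟩ := Fintype.not_linearIndependent_iff.mp hli
      set g' : ι → ℝ := fun i => if h : i ∈ s then g ⟨i, h⟩ else 0 with hg'def
      have hgsum : ∑ i ∈ s, g' i • v i = 0 := by
        rw [← Finset.sum_coe_sort s (fun i => g' i • v i)]
        rw [← hg0]
        apply Finset.sum_congr rfl
        intro i _
        simp [g']
      have key : ∀ G : ι → ℝ, (∑ i ∈ s, G i • v i = 0) → (∀ j ∈ s, 0 < G j → 
          ∃ t : Finset ι, t ⊆ s ∧ LinearIndependent ℝ (fun i : ↥t => v ↑i) ∧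
          ∃ d : ι → ℝ, (∀ i, 0 ≤ d i) ∧ ∑ i ∈ t, d i • v i = ∑ i ∈ s, c i • v i) := by
        intro G hG j0 hj0s hj0
        have hTne : (s.filter (fun i => 0 < G i)).Nonempty :=
          ⟨j0, Finset.mem_filter.mpr ⟨hj0s, hj0⟩⟩
        obtain ⟨j, hjT, hjmin⟩ := Finset.exists_min_image _ (fun i => c i / G i) hTne
        obtain ⟨hjs, hGj⟩ := Finset.mem_filter.mp hjT
        set τ := c j / G j with hτdef
        have hτ : 0 ≤ τ := div_nonneg (hc j) hGj.le
        set c' : ι → ℝ := fun i => if i ∈ s then c i - τ * G i else 0 with hc'def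
        have hc' : ∀ i, 0 ≤ c' i := by
          intro i
          by_cases hi : i ∈ s
          · simp only [c', if_pos hi, sub_nonneg]
            by_cases hGi : 0 < G i
            · have := hjmin i (Finset.mem_filter.mpr ⟨hi, hGi⟩)
              calc τ * G i ≤ (c i / G i) * G i := by
                    exact mul_le_mul_of_nonneg_right this hGi.le
                _ = c i := div_mul_cancel₀ _ (ne_of_gt hGi)
            · exact le_trans (mul_nonpos_of_nonneg_of_nonpos hτ (not_lt.mp hGi)) (hc i)
          · simp [c', hi]
        have hc'j : c' j = 0 := by
          simp only [c', if_pos hjs, hτdef]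
          field_simp
          ring
        have hsum : ∑ i ∈ s.erase j, c' i • v i = ∑ i ∈ s, c i • v i := by
          rw [Finset.sum_erase _ (by rw [hc'j, zero_smul])]
          have h1 : ∑ i ∈ s, c' i • v i = ∑ i ∈ s, (c i • v i - τ • (G i • v i)) := by
            apply Finset.sum_congr rfl
            intro i hi
            simp [c', if_pos hi, sub_smul, smul_smul]
          rw [h1, Finset.sum_sub_distrib, ← Finset.smul_sum, hG, smul_zero, sub_zero]
        obtain ⟨t, hts, hli', d, hd, hsum'⟩ :=
          ih (s.erase j) (Finset.erase_ssubset hjs) c' hc'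
        exact ⟨t, hts.trans (Finset.erase_subset j s), hli', d, hd, hsum'.trans hsum⟩
      have hi0' : g' ↑i0 ≠ 0 := by simpa [g'] using hi0
      rcases hi0'.lt_or_gt with h | h
      · exact key (fun i => -g' i) (by simp only [neg_smul, Finset.sum_neg_distrib, hgsum, neg_zero])
          i0 i0.2 (by simpa using h)
      · exact key g' hgsum i0 i0.2 h
end Cone


section Cone2
variable {E : Type*} [NormedAddCommGroup E] [NormedSpace ℝ E]

lemma isClosed_li_cone {ι : Type*} [Fintype ι] (v : ι → E) (t : Finset ι)
    (hli : LinearIndependent ℝ (fun i : ↥t => v ↑i)) :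
    IsClosed {x : E | ∃ d : ι → ℝ, (∀ i, 0 ≤ d i) ∧ ∑ i ∈ t, d i • v i = x} := by
  classical
  set φ : (↥t → ℝ) →ₗ[ℝ] E := Fintype.linearCombination ℝ (fun i : ↥t => v ↑i) with hφdef
  have hφ : ∀ d : ↥t → ℝ, φ d = ∑ i : ↥t, d i • v ↑i := by
    intro d; simp [φ, Fintype.linearCombination_apply]
  have hker : LinearMap.ker φ = ⊥ := by
    rw [LinearMap.ker_eq_bot']
    intro d hd
    funext i
    exact (Fintype.linearIndependent_iff.mp hli) d (by rw [← hφ]; exact hd) i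
  have hemb : Topology.IsClosedEmbedding φ := LinearMap.isClosedEmbedding_of_injective hker
  have heq : {x : E | ∃ d : ι → ℝ, (∀ i, 0 ≤ d i) ∧ ∑ i ∈ t, d i • v i = x}
      = φ '' {d : ↥t → ℝ | ∀ i, 0 ≤ d i} := by
    ext x
    constructor
    · rintro ⟨d, hd, rfl⟩
      refine ⟨fun i => d ↑i, fun i => hd ↑i, ?_⟩
      rw [hφ, Finset.sum_coe_sort t (fun i => d i • v i)]
    · rintro ⟨d, hd, rfl⟩
      refine ⟨fun i => if h : i ∈ t then d ⟨i, h⟩ else 0, ?_, ?_⟩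
      · intro i; by_cases h : i ∈ t <;> simp [h, hd _]
      · rw [hφ, ← Finset.sum_coe_sort t
          (fun i => (if h : i ∈ t then d ⟨i, h⟩ else 0) • v i)]
        apply Finset.sum_congr rfl
        intro i _
        simp
  rw [heq]
  apply hemb.isClosedMap
  have : {d : ↥t → ℝ | ∀ i, 0 ≤ d i} = ⋂ i, (fun d : ↥t → ℝ => d i) ⁻¹' Set.Ici 0 := by
    ext d; simp [Set.mem_iInter]
  rw [this]
  exact isClosed_iInter fun i => isClosed_Ici.preimage (continuous_apply i)
end Cone2


def coneSet {E : Type*} [AddCommMonoid E] [Module ℝ E] {ι : Type*} [Fintype ι]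
    (v : ι → E) : Set E :=
  {x | ∃ c : ι → ℝ, (∀ i, 0 ≤ c i) ∧ ∑ i, c i • v i = x}

section Cone3
variable {E : Type*} [NormedAddCommGroup E] [NormedSpace ℝ E]
  {ι : Type*} [Fintype ι]


lemma isClosed_coneSet (v : ι → E) : IsClosed (coneSet v) := by
  classical
  have heq : coneSet v = ⋃ t ∈ {t : Finset ι | LinearIndependent ℝ (fun i : ↥t => v ↑i)},
      {x : E | ∃ d : ι → ℝ, (∀ i, 0 ≤ d i) ∧ ∑ i ∈ t, d i • v i = x} := by
    ext x
    simp only [Set.mem_iUnion, Set.mem_setOf_eq]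
    constructor
    · rintro ⟨c, hc, rfl⟩
      obtain ⟨t, _, hli, d, hd, hsum⟩ := coneCarath v Finset.univ c hc
      exact ⟨t, hli, d, hd, hsum⟩
    · rintro ⟨t, hli, d, hd, rfl⟩
      refine ⟨fun i => if i ∈ t then d i else 0, fun i => by by_cases h : i ∈ t <;> simp [h, hd _], ?_⟩
      rw [show (∑ i : ι, (if i ∈ t then d i else 0) • v i)
          = ∑ i : ι, (if i ∈ t then d i • v i else 0) from
        Finset.sum_congr rfl (fun i _ => by split <;> simp),
        Finset.sum_ite_mem, Finset.univ_inter]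
  rw [heq]
  exact Set.Finite.isClosed_biUnion (Set.toFinite _) fun t ht => isClosed_li_cone v t ht

lemma coneSet_smul (v : ι → E) {x : E} {r : ℝ} (hr : 0 ≤ r) (hx : x ∈ coneSet v) :
    r • x ∈ coneSet v := by
  obtain ⟨c, hc, rfl⟩ := hx
  refine ⟨fun i => r * c i, fun i => mul_nonneg hr (hc i), ?_⟩
  rw [Finset.smul_sum]
  exact Finset.sum_congr rfl fun i _ => by simp [mul_smul]
end Cone3



theorem stmt14 (k n m : ℕ) (K : Set (Fin k → ℝ))
    (hKcone : ∀ (c : ℝ), 0 ≤ c → ∀ x ∈ K, c • x ∈ K)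
    (hKclosed : IsClosed K) (hKconvex : Convex ℝ K)
    (hKpointed : K ∩ (-K) = {0})
    (hKne : K ≠ {0}) (hKuniv : K ≠ Set.univ)
    (L : Matrix (Fin k) (Fin n) ℝ) (A : Matrix (Fin m) (Fin n) ℝ) (b : Fin m → ℝ)
    (hA : ∃ x : Fin n → ℝ, (∀ i, 0 ≤ x i) ∧ A *ᵥ x = b)
    (hrec : {e : Fin k → ℝ | ∃ x : Fin n → ℝ, (∀ i, 0 ≤ x i) ∧ A *ᵥ x = 0 ∧ L *ᵥ x = e}
      ∩ (-K) = {0}) :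
    IsClosed ({w : Fin k → ℝ | ∃ x : Fin n → ℝ, ((∀ i, 0 ≤ x i) ∧ A *ᵥ x = b) ∧ L *ᵥ x = w} + K)
    ∧ Convex ℝ ({w : Fin k → ℝ | ∃ x : Fin n → ℝ, ((∀ i, 0 ≤ x i) ∧ A *ᵥ x = b) ∧ L *ᵥ x = w} + K) := by
  classical
  set S : Set (Fin k → ℝ) :=
    {w | ∃ x : Fin n → ℝ, ((∀ i, 0 ≤ x i) ∧ A *ᵥ x = b) ∧ L *ᵥ x = w} with hSdef
  -- the auxiliary cone in the product space
  set v : (Fin n ⊕ Unit) → (Fin k → ℝ) × ((Fin m → ℝ) × ℝ) :=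
    Sum.elim (fun i => ((fun j => L j i), ((fun j => A j i), 0)))
      (fun _ => (0, (-b, 1))) with hvdef
  have hmulVec : ∀ (p : ℕ) (M : Matrix (Fin p) (Fin n) ℝ) (x : Fin n → ℝ),
      M *ᵥ x = ∑ i, x i • (fun j => M j i) := by
    intro p M x
    ext j
    simp [mulVec, dotProduct, Finset.sum_apply, mul_comm]
  have hsumv : ∀ c : (Fin n ⊕ Unit) → ℝ,
      ∑ i, c i • v i = (L *ᵥ (c ∘ Sum.inl),
        (A *ᵥ (c ∘ Sum.inl) - c (Sum.inr ()) • b, c (Sum.inr ()))) := by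
    intro c
    rw [Fintype.sum_sum_type]
    simp only [v, Sum.elim_inl, Sum.elim_inr]
    refine Prod.ext ?_ (Prod.ext ?_ ?_)
    · simp [Prod.fst_sum, hmulVec, Function.comp]
    · simp [Prod.snd_add, Prod.fst_add, Prod.snd_sum, Prod.fst_sum, hmulVec,
        Function.comp, sub_eq_add_neg, smul_neg]
    · simp [Prod.snd_add, Prod.snd_sum, smul_eq_mul]
  have hmem : ∀ (w : Fin k → ℝ) (r : ℝ), 0 ≤ r →
      ((w, ((0 : Fin m → ℝ), r)) ∈ coneSet v ↔
        ∃ x : Fin n → ℝ, (∀ i, 0 ≤ x i) ∧ A *ᵥ x = r • b ∧ L *ᵥ x = w) := by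
    intro w r hr
    constructor
    · rintro ⟨c, hc, hcs⟩
      rw [hsumv] at hcs
      simp only [Prod.mk.injEq] at hcs
      obtain ⟨h1, h2, h3⟩ := hcs
      refine ⟨c ∘ Sum.inl, fun i => hc _, ?_, h1⟩
      have h2' := sub_eq_zero.mp h2
      rw [h3] at h2'
      exact h2'
    · rintro ⟨x, hx, hAx, hLx⟩
      refine ⟨Sum.elim x (fun _ : Unit => r), ?_, ?_⟩
      · rintro (i | i); exacts [hx i, hr]
      · rw [hsumv]
        have h1 : (Sum.elim x (fun _ : Unit => r)) ∘ Sum.inl = x := rfl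
        simp [h1, hAx, hLx]
  -- S and the recession cone as slices of the cone
  have hSmem : ∀ w, w ∈ S ↔ (w, ((0 : Fin m → ℝ), (1:ℝ))) ∈ coneSet v := by
    intro w
    rw [hmem w 1 zero_le_one]
    simp only [one_smul, hSdef, Set.mem_setOf_eq, and_assoc]
  have hSclosed : IsClosed S := by
    have : S = (fun w : Fin k → ℝ => (w, ((0 : Fin m → ℝ), (1:ℝ)))) ⁻¹' coneSet v := by
      ext w; exact hSmem w
    rw [this]
    exact (isClosed_coneSet v).preimage (continuous_id.prodMk continuous_const)
  have hSconvex : Convex ℝ S := by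
    rintro w1 ⟨x1, ⟨hx1, hAx1⟩, hLx1⟩ w2 ⟨x2, ⟨hx2, hAx2⟩, hLx2⟩ a c ha hc hac
    refine ⟨a • x1 + c • x2, ⟨?_, ?_⟩, ?_⟩
    · intro i
      exact add_nonneg (mul_nonneg ha (hx1 i)) (mul_nonneg hc (hx2 i))
    · rw [mulVec_add, mulVec_smul, mulVec_smul, hAx1, hAx2, ← add_smul, hac, one_smul]
    · rw [mulVec_add, mulVec_smul, mulVec_smul, hLx1, hLx2]
  refine ⟨?_, hSconvex.add hKconvex⟩
  -- closedness of S + K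
  rw [← isSeqClosed_iff_isClosed]
  intro p w hp hpw
  have hmemadd : ∀ j, ∃ s ∈ S, ∃ q ∈ K, s + q = p j := fun j => Set.mem_add.mp (hp j)
  choose s hs q hq hsq using hmemadd
  by_cases hbdd : ∃ C, ∀ j, ‖q j‖ ≤ C
  · obtain ⟨C, hC⟩ := hbdd
    have hqball : ∀ j, q j ∈ Metric.closedBall (0 : Fin k → ℝ) C := by
      intro j; simpa [Metric.mem_closedBall, dist_zero_right] using hC j
    obtain ⟨qlim, _, φ, hφ, hqlim⟩ :=
      (isCompact_closedBall (0 : Fin k → ℝ) C).tendsto_subseq hqball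
    have hqlimK : qlim ∈ K :=
      hKclosed.mem_of_tendsto hqlim (Filter.Eventually.of_forall fun j => hq (φ j))
    have hslim : Filter.Tendsto (fun j => s (φ j)) Filter.atTop (nhds (w - qlim)) := by
      have : (fun j => s (φ j)) = fun j => p (φ j) - q (φ j) := by
        funext j; rw [eq_sub_iff_add_eq]; exact hsq (φ j)
      rw [this]
      exact ((hpw.comp hφ.tendsto_atTop).sub hqlim)
    have hwq : w - qlim ∈ S :=
      hSclosed.mem_of_tendsto hslim (Filter.Eventually.of_forall fun j => hs (φ j))
    have : (w - qlim) + qlim = w := by abel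
    exact this ▸ Set.add_mem_add hwq hqlimK
  · exfalso
    push_neg at hbdd
    choose ψ hψ using fun c : ℕ => hbdd c
    have hqpos : ∀ c : ℕ, 0 < ‖q (ψ c)‖ := fun c =>
      lt_of_le_of_lt (Nat.cast_nonneg c) (hψ c)
    set u : ℕ → (Fin k → ℝ) := fun c => ‖q (ψ c)‖⁻¹ • q (ψ c) with hudef
    have husph : ∀ c, u c ∈ Metric.sphere (0 : Fin k → ℝ) 1 := by
      intro c
      simp only [u, Metric.mem_sphere, dist_zero_right, norm_smul, norm_inv, norm_norm]
      exact inv_mul_cancel₀ (hqpos c).ne'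
    obtain ⟨ulim, hulimsph, φ, hφ, hulim⟩ :=
      (isCompact_sphere (0 : Fin k → ℝ) 1).tendsto_subseq husph
    have hulimK : ulim ∈ K := hKclosed.mem_of_tendsto hulim
      (Filter.Eventually.of_forall fun j => hKcone _ (inv_nonneg.mpr (norm_nonneg _)) _ (hq _))
    -- norms tend to infinity
    have hnorminf : Filter.Tendsto (fun j => ‖q (ψ (φ j))‖) Filter.atTop Filter.atTop := by
      apply Filter.tendsto_atTop_mono (fun j => (hψ (φ j)).le)
      exact tendsto_natCast_atTop_atTop.comp hφ.tendsto_atTop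
    set r : ℕ → ℝ := fun j => ‖q (ψ (φ j))‖⁻¹ with hrdef
    have hr0 : ∀ j, 0 ≤ r j := fun j => inv_nonneg.mpr (norm_nonneg _)
    have hrlim : Filter.Tendsto r Filter.atTop (nhds 0) :=
      Filter.Tendsto.comp tendsto_inv_atTop_zero hnorminf
    -- p is bounded
    obtain ⟨M, hM⟩ : ∃ M, ∀ j, ‖p j‖ ≤ M := by
      have := hpw.norm.bddAbove_range
      obtain ⟨M, hM⟩ := this
      exact ⟨M, fun j => hM ⟨j, rfl⟩⟩
    have hrp : Filter.Tendsto (fun j => r j • p (ψ (φ j))) Filter.atTop (nhds 0) := by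
      apply squeeze_zero_norm (f := fun j => r j • p (ψ (φ j))) (a := fun j => r j * M)
      · intro j
        rw [norm_smul, Real.norm_eq_abs, abs_of_nonneg (hr0 j)]
        exact mul_le_mul_of_nonneg_left (hM _) (hr0 j)
      · simpa using hrlim.mul_const M
    have hslim2 : Filter.Tendsto (fun j => r j • s (ψ (φ j))) Filter.atTop (nhds (-ulim)) := by
      have heq : (fun j => r j • s (ψ (φ j)))
          = fun j => r j • p (ψ (φ j)) - u (φ j) := by
        funext j
        have h1 : s (ψ (φ j)) = p (ψ (φ j)) - q (ψ (φ j)) := by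
          rw [eq_sub_iff_add_eq]; exact hsq _
        rw [h1, smul_sub]
      rw [heq]
      simpa using hrp.sub hulim
    -- membership in the cone and passage to the limit
    have hconemem : ∀ j, ((r j • s (ψ (φ j)), ((0 : Fin m → ℝ), r j))
        : (Fin k → ℝ) × ((Fin m → ℝ) × ℝ)) ∈ coneSet v := by
      intro j
      have h1 : (s (ψ (φ j)), ((0 : Fin m → ℝ), (1:ℝ))) ∈ coneSet v :=
        (hSmem _).mp (hs _)
      have h2 := coneSet_smul v (hr0 j) h1
      have h3 : r j • ((s (ψ (φ j)), ((0 : Fin m → ℝ), (1:ℝ)))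
          : (Fin k → ℝ) × ((Fin m → ℝ) × ℝ))
          = (r j • s (ψ (φ j)), ((0 : Fin m → ℝ), r j)) := by
        simp [Prod.smul_mk]
      rwa [h3] at h2
    have hlimpair : Filter.Tendsto
        (fun j => ((r j • s (ψ (φ j)), ((0 : Fin m → ℝ), r j))
          : (Fin k → ℝ) × ((Fin m → ℝ) × ℝ))) Filter.atTop
        (nhds ((-ulim), ((0 : Fin m → ℝ), (0:ℝ)))) :=
      hslim2.prodMk_nhds (tendsto_const_nhds.prodMk_nhds hrlim)
    have hmemlim := (isClosed_coneSet v).mem_of_tendsto hlimpair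
      (Filter.Eventually.of_forall hconemem)
    have hrecmem : -ulim ∈ {e : Fin k → ℝ | ∃ x : Fin n → ℝ,
        (∀ i, 0 ≤ x i) ∧ A *ᵥ x = 0 ∧ L *ᵥ x = e} := by
      obtain ⟨x, hx, hAx, hLx⟩ := (hmem (-ulim) 0 le_rfl).mp hmemlim
      exact ⟨x, hx, by rwa [zero_smul] at hAx, hLx⟩
    have hneg : -ulim ∈ (-K) := Set.neg_mem_neg.mpr hulimK
    have : -ulim = 0 := by
      have := hrec ▸ Set.mem_inter hrecmem hneg
      simpa using this
    have hu0 : ulim = 0 := by simpa [neg_eq_zero] using this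
    rw [hu0] at hulimsph
    simp at hulimsph
end

section
/- Let n = 1, k = 2, m = 2, L = (0,0)ᵀ ∈ ℝ^{2×1}, A = (1,1)ᵀ ∈ ℝ^{2×1}, b = (−1,−1)ᵀ, K = ℝ²_+. Then (−1,−1)ᵀ ∈ h^L(ℬ^L) but (−1,−1)ᵀ ∉ h(ℬ), where ℬ^L = {(λ, z, v) ∈ int(ℝ²_+) × ℝ² × ℝ² : λᵀv − zᵀb ≤ 0, Lᵀλ − Aᵀz ∈ ℝ_+} with h^L(λ, z, v) = v, and ℬ = {(λ, U, v) ∈ int(ℝ²_+) × ℝ^{2×2} × ℝ² : λᵀv = 0, (L − UA)ᵀλ ∈ ℝ_+} with h(λ, U, v) = Ub + v. Hence the inclusion h(ℬ) ⊆ h^L(ℬ^L) can be strict. -/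
open Matrix

theorem stmt18
    (L : Matrix (Fin 2) (Fin 1) ℝ) (A : Matrix (Fin 2) (Fin 1) ℝ) (b : Fin 2 → ℝ)
    (hL : L = fun _ _ => 0) (hA : A = fun _ _ => 1) (hb : b = ![-1, -1]) :
    (![-1, -1] : Fin 2 → ℝ) ∈
      {w : Fin 2 → ℝ | ∃ (l : Fin 2 → ℝ) (z : Fin 2 → ℝ) (v : Fin 2 → ℝ),
        ((∀ i, 0 < l i) ∧ l ⬝ᵥ v - z ⬝ᵥ b ≤ 0 ∧
          ∀ i, 0 ≤ (Lᵀ *ᵥ l - Aᵀ *ᵥ z) i) ∧ v = w} ∧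
    (![-1, -1] : Fin 2 → ℝ) ∉
      {w : Fin 2 → ℝ | ∃ (l : Fin 2 → ℝ) (U : Matrix (Fin 2) (Fin 2) ℝ) (v : Fin 2 → ℝ),
        ((∀ i, 0 < l i) ∧ l ⬝ᵥ v = 0 ∧
          ∀ i, 0 ≤ ((L - U * A)ᵀ *ᵥ l) i) ∧ U *ᵥ b + v = w} := by
  subst hL hA hb
  constructor
  · refine ⟨![1, 1], ![-1, -1], ![-1, -1], ⟨?_, ?_, ?_⟩, rfl⟩
    · intro i; fin_cases i <;> norm_num
    · norm_num [dotProduct, Fin.sum_univ_two]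
    · intro i
      fin_cases i <;> norm_num [mulVec, dotProduct, Fin.sum_univ_two, transpose, vecHead, vecTail]
  · rintro ⟨l, U, v, ⟨hl, hlv, hU⟩, hsum⟩
    have h0 := hU 0
    simp [mulVec, dotProduct, Fin.sum_univ_two, transpose, Matrix.mul_apply,
      Matrix.sub_apply] at h0
    change 0 ≤ (0 - (U * (Matrix.of fun (_ : Fin 2) (_ : Fin 1) => (1:ℝ))) 0 0) * l 0 +
      (0 - (U * (Matrix.of fun (_ : Fin 2) (_ : Fin 1) => (1:ℝ))) 1 0) * l 1 at h0
    simp [Matrix.mul_apply, Fin.sum_univ_two] at h0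
    have hv0 : v 0 = -1 + (U 0 0 + U 0 1) := by
      have := congrFun hsum 0
      simp [mulVec, dotProduct, Fin.sum_univ_two] at this
      linarith
    have hv1 : v 1 = -1 + (U 1 0 + U 1 1) := by
      have := congrFun hsum 1
      simp [mulVec, dotProduct, Fin.sum_univ_two] at this
      linarith
    have hl0 := hl 0
    have hl1 := hl 1
    simp [dotProduct, Fin.sum_univ_two, hv0, hv1] at hlv
    nlinarith [mul_pos hl0 hl1]
end

section
/- Let K ⊆ ℝ^k be a nontrivial pointed closed convex cone and U ∈ ℝ^{k×m} with (L − UA)(ℝ^n_+) ∩ (−K) = {0}. Then every efficient solution x̄ ∈ ℝ^n_+ of the problem of minimizing (L − UA)x over ℝ^n_+ with respect to K satisfies (L − UA)x̄ = v for some v with γᵀv = 0, where γ ∈ K*⁰ is a linear scalarization witness; in particular γᵀ((L − UA)x̄) = 0 and (L − UA)ᵀγ ∈ ℝ^n_+. -/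
open Matrix

section helperSection
open Set
open Matrix Set

section aux
variable {k : ℕ}

lemma sum_single_eq (x : Fin k → ℝ) : x = ∑ i, x i • (Pi.single i 1 : Fin k → ℝ) := by
  ext j
  simp [Finset.sum_apply, Pi.single_apply]

lemma lin_eq_dot (f : (Fin k → ℝ) →ₗ[ℝ] ℝ) (x : Fin k → ℝ) :
    f x = (fun i => f (Pi.single i 1)) ⬝ᵥ x := by
  conv_lhs => rw [sum_single_eq x]
  rw [map_sum, dotProduct]
  exact Finset.sum_congr rfl fun i _ => by rw [_root_.map_smul]; simp [mul_comm]

lemma cont_dot (u : Fin k → ℝ) : Continuous fun γ : Fin k → ℝ => γ ⬝ᵥ u := by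
  unfold dotProduct
  exact continuous_finset_sum _ fun i _ => (continuous_apply i).mul continuous_const

/-- the cone generated by finitely many vectors -/
def coneGen {N : ℕ} (g : Fin N → (Fin k → ℝ)) : Set (Fin k → ℝ) :=
  {x | ∃ c : Fin N → ℝ, (∀ j, 0 ≤ c j) ∧ x = ∑ j, c j • g j}

lemma coneGen_convex {N : ℕ} (g : Fin N → (Fin k → ℝ)) : Convex ℝ (coneGen g) := by
  rintro x ⟨c1, hc1, rfl⟩ y ⟨c2, hc2, rfl⟩ a b ha hb hab
  refine ⟨fun j => a * c1 j + b * c2 j,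
    fun j => add_nonneg (mul_nonneg ha (hc1 j)) (mul_nonneg hb (hc2 j)), ?_⟩
  rw [Finset.smul_sum, Finset.smul_sum, ← Finset.sum_add_distrib]
  exact Finset.sum_congr rfl fun j _ => by rw [add_smul, smul_smul, smul_smul]

lemma mem_coneGen {N : ℕ} (g : Fin N → (Fin k → ℝ)) (j : Fin N) : g j ∈ coneGen g := by
  refine ⟨fun j' => if j' = j then 1 else 0, fun j' => by positivity, ?_⟩
  simp [ite_smul]

lemma coneGen_smul {N : ℕ} (g : Fin N → (Fin k → ℝ)) {x : Fin k → ℝ} (hx : x ∈ coneGen g)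
    {t : ℝ} (ht : 0 ≤ t) : t • x ∈ coneGen g := by
  obtain ⟨c, hc, rfl⟩ := hx
  refine ⟨fun j => t * c j, fun j => mul_nonneg ht (hc j), ?_⟩
  rw [Finset.smul_sum]
  exact Finset.sum_congr rfl fun j _ => by simp [smul_smul]

lemma zero_mem_coneGen {N : ℕ} (g : Fin N → (Fin k → ℝ)) : (0 : Fin k → ℝ) ∈ coneGen g :=
  ⟨0, fun _ => le_rfl, by simp⟩

lemma carath_aux {N : ℕ} (g : Fin N → (Fin k → ℝ)) (s : Finset (Fin N)) :
    ∀ c : Fin N → ℝ, (∀ j, 0 ≤ c j) →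
    ∃ t : Finset (Fin N), LinearIndependent ℝ (fun j : t => g j) ∧
      ∃ c' : Fin N → ℝ, (∀ j, 0 ≤ c' j) ∧ ∑ j ∈ t, c' j • g j = ∑ j ∈ s, c j • g j := by
  induction s using Finset.strongInductionOn with
  | _ s ih =>
    intro c hc
    by_cases hli : LinearIndependent ℝ (fun j : s => g j)
    · exact ⟨s, hli, c, hc, rfl⟩
    · obtain ⟨d, hdsum, j₁, hj₁⟩ := Fintype.not_linearIndependent_iff.mp hli
      -- extend d to Fin N
      set D : Fin N → ℝ := fun j => if h : j ∈ s then d ⟨j, h⟩ else 0 with hD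
      have hDsum : ∑ j ∈ s, D j • g j = 0 := by
        rw [← Finset.sum_coe_sort s (fun j => D j • g j)]
        rw [← hdsum]
        exact Finset.sum_congr rfl fun j _ => by simp [hD, j.2]
      have hDne : D j₁.1 ≠ 0 := by simp [hD, j₁.2]; exact hj₁
      -- WLOG some positive coordinate on s
      have key : ∀ D : Fin N → ℝ, (∑ j ∈ s, D j • g j = 0) → (∀ j ∉ s, D j = 0) →
          (∃ j ∈ s, 0 < D j) →
          ∃ t : Finset (Fin N), LinearIndependent ℝ (fun j : t => g j) ∧
            ∃ c' : Fin N → ℝ, (∀ j, 0 ≤ c' j) ∧ ∑ j ∈ t, c' j • g j = ∑ j ∈ s, c j • g j := by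
        intro D hDsum hDout ⟨jp, hjps, hjp⟩
        set T : Finset (Fin N) := s.filter (fun j => 0 < D j) with hT
        have hTne : T.Nonempty := ⟨jp, Finset.mem_filter.mpr ⟨hjps, hjp⟩⟩
        obtain ⟨j₀, hj₀T, hj₀min⟩ := T.exists_min_image (fun j => c j / D j) hTne
        have hj₀s : j₀ ∈ s := (Finset.mem_filter.mp hj₀T).1
        have hDj₀ : 0 < D j₀ := (Finset.mem_filter.mp hj₀T).2
        set ρ : ℝ := c j₀ / D j₀ with hρ
        have hρ0 : 0 ≤ ρ := div_nonneg (hc j₀) hDj₀.le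
        set c1 : Fin N → ℝ := fun j => c j - ρ * D j with hc1
        have hc1nn : ∀ j ∈ s, 0 ≤ c1 j := by
          intro j hj
          by_cases hDj : 0 < D j
          · have := hj₀min j (Finset.mem_filter.mpr ⟨hj, hDj⟩)
            have : ρ * D j ≤ c j := by
              rw [hρ] at this ⊢
              calc c j₀ / D j₀ * D j ≤ c j / D j * D j := by
                    exact mul_le_mul_of_nonneg_right this hDj.le
                _ = c j := by field_simp
            simp [hc1]; linarith
          · push_neg at hDj
            have : ρ * D j ≤ 0 := mul_nonpos_of_nonneg_of_nonpos hρ0 hDj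
            simp only [hc1]
            linarith [hc j]
        have hc1j₀ : c1 j₀ = 0 := by
          simp only [hc1, hρ]
          field_simp
          ring
        have hsum1 : ∑ j ∈ s, c1 j • g j = ∑ j ∈ s, c j • g j := by
          simp only [hc1, sub_smul, Finset.sum_sub_distrib]
          rw [show ∑ j ∈ s, (ρ * D j) • g j = ρ • ∑ j ∈ s, D j • g j by
            rw [Finset.smul_sum]; exact Finset.sum_congr rfl fun j _ => by simp [smul_smul]]
          rw [hDsum, smul_zero, sub_zero]
        have hsum2 : ∑ j ∈ s.erase j₀, c1 j • g j = ∑ j ∈ s, c1 j • g j := by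
          apply Finset.sum_erase
          rw [hc1j₀, zero_smul]
        -- make coefficients globally nonneg
        set c2 : Fin N → ℝ := fun j => if j ∈ s.erase j₀ then c1 j else 0 with hc2
        have hc2nn : ∀ j, 0 ≤ c2 j := by
          intro j
          simp only [hc2]
          split
          · exact hc1nn j (Finset.mem_of_mem_erase ‹_›)
          · exact le_rfl
        have hsum3 : ∑ j ∈ s.erase j₀, c2 j • g j = ∑ j ∈ s.erase j₀, c1 j • g j :=
          Finset.sum_congr rfl fun j hj => by simp only [hc2]; rw [if_pos hj]
        obtain ⟨t, hli', c', hc', hsum'⟩ := ih (s.erase j₀) (Finset.erase_ssubset hj₀s) c2 hc2nn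
        exact ⟨t, hli', c', hc', by rw [hsum', hsum3, hsum2, hsum1]⟩
      rcases lt_or_gt_of_ne hDne with hneg | hpos
      · refine key (-D) (by simp only [Pi.neg_apply, neg_smul, Finset.sum_neg_distrib, hDsum, neg_zero]) (fun j hj => by simp [hD, hj])
          ⟨j₁, j₁.2, by simpa using hneg⟩
      · exact key D hDsum (fun j hj => by simp [hD, hj]) ⟨j₁, j₁.2, hpos⟩

lemma coneGen_eq_union {N : ℕ} (g : Fin N → (Fin k → ℝ)) :
    coneGen g = ⋃ (s : {s : Finset (Fin N) // LinearIndependent ℝ (fun j : s => g j)}),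
      {x | ∃ c : Fin N → ℝ, (∀ j, 0 ≤ c j) ∧ x = ∑ j ∈ (s : Finset (Fin N)), c j • g j} := by
  ext x
  simp only [Set.mem_iUnion]
  constructor
  · rintro ⟨c, hc, rfl⟩
    obtain ⟨t, hli, c', hc', hsum⟩ := carath_aux g Finset.univ c hc
    exact ⟨⟨t, hli⟩, c', hc', hsum.symm⟩
  · rintro ⟨s, c, hc, rfl⟩
    refine ⟨fun j => if j ∈ (s : Finset (Fin N)) then c j else 0,
      fun j => by dsimp; split; exacts [hc j, le_rfl], ?_⟩
    symm
    simp only [ite_smul, zero_smul]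
    rw [Finset.sum_ite_mem, Finset.univ_inter]

lemma closed_indep_cone {N : ℕ} (g : Fin N → (Fin k → ℝ)) (s : Finset (Fin N))
    (hli : LinearIndependent ℝ (fun j : s => g j)) :
    IsClosed {x | ∃ c : Fin N → ℝ, (∀ j, 0 ≤ c j) ∧ x = ∑ j ∈ s, c j • g j} := by
  classical
  set φ : (↥s → ℝ) →ₗ[ℝ] (Fin k → ℝ) :=
    { toFun := fun c => ∑ j : ↥s, c j • g (j : Fin N)
      map_add' := fun a b => by simp [add_smul, Finset.sum_add_distrib]
      map_smul' := fun t a => by simp [Finset.smul_sum, smul_smul] } with hφ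
  have hinj : Function.Injective φ := by
    intro a b hab
    have hz : ∑ j : ↥s, (a j - b j) • g (j : Fin N) = 0 := by
      simp only [sub_smul, Finset.sum_sub_distrib]
      simp only [hφ, LinearMap.coe_mk, AddHom.coe_mk] at hab
      exact sub_eq_zero.mpr hab
    have hall := Fintype.linearIndependent_iff.mp hli (fun j => a j - b j) hz
    ext j
    have := hall j
    linarith
  have hset : {x | ∃ c : Fin N → ℝ, (∀ j, 0 ≤ c j) ∧ x = ∑ j ∈ s, c j • g j}
      = φ '' {c | ∀ j, 0 ≤ c j} := by
    ext x
    constructor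
    · rintro ⟨c, hc, rfl⟩
      refine ⟨fun j => c (j : Fin N), fun j => hc _, ?_⟩
      simp only [hφ, LinearMap.coe_mk, AddHom.coe_mk]
      exact (Finset.sum_coe_sort s (fun j => c j • g j))
    · rintro ⟨c, hc, rfl⟩
      refine ⟨fun j => if h : j ∈ s then c ⟨j, h⟩ else 0,
        fun j => by dsimp; split; exacts [hc _, le_rfl], ?_⟩
      simp only [hφ, LinearMap.coe_mk, AddHom.coe_mk]
      rw [← Finset.sum_coe_sort s]
      exact Finset.sum_congr rfl fun j _ => by simp [j.2]
  rw [hset]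
  have hclosedorth : IsClosed {c : ↥s → ℝ | ∀ j, 0 ≤ c j} := by
    have : {c : ↥s → ℝ | ∀ j, 0 ≤ c j} = ⋂ j, {c | 0 ≤ c j} := by
      ext c; simp
    rw [this]
    exact isClosed_iInter fun j => isClosed_le continuous_const (continuous_apply j)
  exact (LinearMap.isClosedEmbedding_of_injective
    (LinearMap.ker_eq_bot.mpr hinj)).isClosedMap _ hclosedorth

lemma coneGen_closed {N : ℕ} (g : Fin N → (Fin k → ℝ)) : IsClosed (coneGen g) := by
  rw [coneGen_eq_union]
  exact isClosed_iUnion_of_finite fun s => closed_indep_cone g s.1 s.2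

lemma farkas_s19 {N : ℕ} (g : Fin N → (Fin k → ℝ)) (d : Fin k → ℝ)
    (h : ∀ γ : Fin k → ℝ, (∀ j, γ ⬝ᵥ g j ≤ 0) → γ ⬝ᵥ d ≤ 0) : d ∈ coneGen g := by
  by_contra hd
  obtain ⟨f, u, hfE, hfd⟩ :=
    geometric_hahn_banach_closed_point (coneGen_convex g) (coneGen_closed g) hd
  have hu0 : 0 < u := by simpa using hfE 0 (zero_mem_coneGen g)
  have hfle : ∀ y ∈ coneGen g, f y ≤ 0 := by
    intro y hy
    by_contra hpos
    push_neg at hpos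
    have ht : (0:ℝ) < (u + 1) / f y := by positivity
    have := hfE _ (coneGen_smul g hy ht.le)
    rw [_root_.map_smul, smul_eq_mul] at this
    rw [div_mul_cancel₀ _ (ne_of_gt hpos)] at this
    linarith
  set γ : Fin k → ℝ := fun i => f (Pi.single i 1) with hγ
  have hfeq : ∀ x, f x = γ ⬝ᵥ x := fun x => lin_eq_dot (f : (Fin k → ℝ) →ₗ[ℝ] ℝ) x
  have := h γ (fun j => by rw [← hfeq]; exact hfle _ (mem_coneGen g j))
  rw [← hfeq] at this
  linarith


/-- membership in the double dual of a closed convex cone -/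
lemma mem_of_dual_dual {K : Set (Fin k → ℝ)}
    (hKcone : ∀ (c : ℝ), 0 ≤ c → ∀ x ∈ K, c • x ∈ K)
    (hKclosed : IsClosed K) (hKconvex : Convex ℝ K) (h0 : (0 : Fin k → ℝ) ∈ K)
    (d : Fin k → ℝ) (h : ∀ γ : Fin k → ℝ, (∀ u ∈ K, 0 ≤ γ ⬝ᵥ u) → 0 ≤ γ ⬝ᵥ d) :
    d ∈ K := by
  by_contra hd
  obtain ⟨f, u, hfd, hfK⟩ := geometric_hahn_banach_point_closed hKconvex hKclosed hd
  have hu0 : u < 0 := by simpa using hfK 0 h0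
  have hfge : ∀ y ∈ K, 0 ≤ f y := by
    intro y hy
    by_contra hneg
    push_neg at hneg
    have ht : (0:ℝ) < (u - 1) / f y := div_pos_of_neg_of_neg (by linarith) hneg
    have := hfK _ (hKcone _ ht.le y hy)
    rw [_root_.map_smul, smul_eq_mul, div_mul_cancel₀ _ (ne_of_lt hneg)] at this
    linarith
  set γ : Fin k → ℝ := fun i => f (Pi.single i 1) with hγ
  have hfeq : ∀ x, f x = γ ⬝ᵥ x := fun x => lin_eq_dot (f : (Fin k → ℝ) →ₗ[ℝ] ℝ) x
  have := h γ (fun v hv => by rw [← hfeq]; exact hfge v hv)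
  rw [← hfeq] at this
  linarith

lemma interior_dual_nonempty {K : Set (Fin k → ℝ)}
    (hKcone : ∀ (c : ℝ), 0 ≤ c → ∀ x ∈ K, c • x ∈ K)
    (hKclosed : IsClosed K) (hKconvex : Convex ℝ K)
    (hKpointed : K ∩ (-K) = {0}) :
    (interior {γ : Fin k → ℝ | ∀ u ∈ K, 0 ≤ γ ⬝ᵥ u}).Nonempty := by
  have h0 : (0 : Fin k → ℝ) ∈ K := by
    have : (0 : Fin k → ℝ) ∈ K ∩ (-K) := by rw [hKpointed]; rfl
    exact this.1
  set Ks : Set (Fin k → ℝ) := {γ | ∀ u ∈ K, 0 ≤ γ ⬝ᵥ u} with hKs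
  have h0Ks : (0 : Fin k → ℝ) ∈ Ks := fun u _ => by simp
  have hKsconv : Convex ℝ Ks := by
    intro γ₁ h1 γ₂ h2 a b ha hb hab
    intro u hu
    have e1 := h1 u hu
    have e2 := h2 u hu
    rw [add_dotProduct, smul_dotProduct, smul_dotProduct]
    simp only [smul_eq_mul]
    nlinarith
  -- the span of Ks is everything
  have hspan : Submodule.span ℝ Ks = ⊤ := by
    by_contra hne
    obtain ⟨φ, hφne, hφbot⟩ := Submodule.exists_dual_map_eq_bot_of_lt_top
      (lt_top_iff_ne_top.mpr hne) inferInstance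
    set d : Fin k → ℝ := fun i => φ (Pi.single i 1) with hd
    have hφeq : ∀ x, φ x = d ⬝ᵥ x := fun x => lin_eq_dot φ x
    have hvanish : ∀ γ ∈ Ks, d ⬝ᵥ γ = 0 := by
      intro γ hγ
      have : φ γ ∈ Submodule.map φ (Submodule.span ℝ Ks) :=
        Submodule.mem_map_of_mem (Submodule.subset_span hγ)
      rw [hφbot] at this
      rw [← hφeq]
      simpa using this
    have hdK : d ∈ K := mem_of_dual_dual hKcone hKclosed hKconvex h0 d
      (fun γ hγ => by rw [dotProduct_comm, hvanish γ hγ])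
    have hdK' : -d ∈ K := mem_of_dual_dual hKcone hKclosed hKconvex h0 (-d)
      (fun γ hγ => by rw [dotProduct_comm, neg_dotProduct, hvanish γ hγ, neg_zero])
    have : d ∈ K ∩ (-K) := ⟨hdK, by simpa using hdK'⟩
    rw [hKpointed] at this
    have hd0 : d = 0 := this
    apply hφne
    apply LinearMap.ext
    intro x
    rw [hφeq x, hd0]
    simp
  -- affine span is top
  have haff : affineSpan ℝ Ks = ⊤ := by
    rw [AffineSubspace.affineSpan_eq_top_iff_vectorSpan_eq_top_of_nonempty ℝ (Fin k → ℝ) (Fin k → ℝ) ⟨0, h0Ks⟩]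
    rw [eq_top_iff, ← hspan]
    apply Submodule.span_le.mpr
    intro γ hγ
    have : γ = γ -ᵥ 0 := by simp
    rw [this]
    exact Submodule.subset_span (Set.vsub_mem_vsub hγ h0Ks)
  exact (hKsconv.interior_nonempty_iff_affineSpan_eq_top).mpr haff

lemma mulVec_sum_single {n : ℕ} (B : Matrix (Fin k) (Fin n) ℝ) (y : Fin n → ℝ) :
    B *ᵥ y = ∑ i, y i • (B *ᵥ Pi.single i 1) := by
  conv_lhs => rw [sum_single_eq y, ← Matrix.mulVecLin_apply]
  rw [map_sum]
  exact Finset.sum_congr rfl fun i _ => by rw [_root_.map_smul, Matrix.mulVecLin_apply]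

lemma dot_mulVec {n : ℕ} (B : Matrix (Fin k) (Fin n) ℝ) (γ : Fin k → ℝ) (x : Fin n → ℝ) :
    γ ⬝ᵥ (B *ᵥ x) = (Bᵀ *ᵥ γ) ⬝ᵥ x := by
  rw [Matrix.dotProduct_mulVec, ← Matrix.mulVec_transpose]

lemma transpose_entry {n : ℕ} (B : Matrix (Fin k) (Fin n) ℝ) (γ : Fin k → ℝ) (i : Fin n) :
    (Bᵀ *ᵥ γ) i = γ ⬝ᵥ (B *ᵥ Pi.single i 1) := by
  rw [dot_mulVec]
  simp [dotProduct, Pi.single_apply]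

end aux
end helperSection

theorem stmt19 (k n m : ℕ) (K : Set (Fin k → ℝ))
    (hKcone : ∀ (c : ℝ), 0 ≤ c → ∀ x ∈ K, c • x ∈ K)
    (hKclosed : IsClosed K) (hKconvex : Convex ℝ K)
    (hKpointed : K ∩ (-K) = {0})
    (hKne : K ≠ {0}) (hKuniv : K ≠ Set.univ)
    (L : Matrix (Fin k) (Fin n) ℝ) (A : Matrix (Fin m) (Fin n) ℝ)
    (U : Matrix (Fin k) (Fin m) ℝ)
    (hU : {w : Fin k → ℝ | ∃ x : Fin n → ℝ, (∀ i, 0 ≤ x i) ∧ (L - U * A) *ᵥ x = w}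
      ∩ (-K) = {0})
    (xbar : Fin n → ℝ) (hxbar : ∀ i, 0 ≤ xbar i)
    (heff : ¬ ∃ x : Fin n → ℝ, (∀ i, 0 ≤ x i) ∧
      (L - U * A) *ᵥ xbar - (L - U * A) *ᵥ x ∈ K ∧
      (L - U * A) *ᵥ xbar - (L - U * A) *ᵥ x ≠ 0) :
    ∃ (γ : Fin k → ℝ) (v : Fin k → ℝ),
      (∀ u ∈ K, u ≠ 0 → 0 < γ ⬝ᵥ u) ∧
      (∀ x : Fin n → ℝ, (∀ i, 0 ≤ x i) →
        γ ⬝ᵥ ((L - U * A) *ᵥ xbar) ≤ γ ⬝ᵥ ((L - U * A) *ᵥ x)) ∧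
      (L - U * A) *ᵥ xbar = v ∧ γ ⬝ᵥ v = 0 ∧
      ∀ i, 0 ≤ ((L - U * A)ᵀ *ᵥ γ) i := by
  classical
  set B := L - U * A with hBdef
  push_neg at heff
  have h0K : (0 : Fin k → ℝ) ∈ K := by
    have : (0 : Fin k → ℝ) ∈ K ∩ (-K) := by rw [hKpointed]; rfl
    exact this.1
  set Ks : Set (Fin k → ℝ) := {γ | ∀ u ∈ K, 0 ≤ γ ⬝ᵥ u} with hKs
  have hKsconv : Convex ℝ Ks := by
    intro γ₁ h1 γ₂ h2 a b ha hb hab u hu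
    have e1 := h1 u hu
    have e2 := h2 u hu
    rw [add_dotProduct, smul_dotProduct, smul_dotProduct]
    simp only [smul_eq_mul]
    nlinarith
  have hSne : (interior Ks).Nonempty :=
    interior_dual_nonempty hKcone hKclosed hKconvex hKpointed
  obtain ⟨γ₀, hγ₀⟩ := hSne
  -- generators of the polyhedral cone spanned by B xbar and the -B e_i
  set g : Fin (n+1) → (Fin k → ℝ) :=
    fun j => Fin.cases (B *ᵥ xbar) (fun i => -(B *ᵥ Pi.single i 1)) j with hg
  set Ep : Set (Fin k → ℝ) := {γ | ∀ j, γ ⬝ᵥ g j ≤ 0} with hEp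
  have hEconv : Convex ℝ Ep := by
    intro γ₁ h1 γ₂ h2 a b ha hb hab j
    have e1 := h1 j
    have e2 := h2 j
    rw [add_dotProduct, smul_dotProduct, smul_dotProduct]
    simp only [smul_eq_mul]
    nlinarith
  have h0Ep : (0 : Fin k → ℝ) ∈ Ep := fun j => by simp
  -- key nondisjointness
  have hndis : ¬ Disjoint (interior Ks) Ep := by
    intro hdis
    obtain ⟨f, c, hfS, hfE⟩ :=
      geometric_hahn_banach_open hKsconv.interior isOpen_interior hEconv hdis
    set δ : Fin k → ℝ := fun i => f (Pi.single i 1) with hδ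
    have hfeq : ∀ x, f x = δ ⬝ᵥ x := fun x => lin_eq_dot (f : (Fin k → ℝ) →ₗ[ℝ] ℝ) x
    have hc0 : c ≤ 0 := by simpa using hfE 0 h0Ep
    have hδint : ∀ γ ∈ interior Ks, δ ⬝ᵥ γ < 0 := by
      intro γ h
      have := hfS γ h
      rw [hfeq] at this
      linarith
    have hδKs : ∀ γ ∈ Ks, δ ⬝ᵥ γ ≤ 0 := by
      intro γ hγ
      by_contra hb'
      push_neg at hb'
      have ha : δ ⬝ᵥ γ₀ < 0 := hδint γ₀ hγ₀
      set a := δ ⬝ᵥ γ₀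
      set b := δ ⬝ᵥ γ
      have hba : 0 < b - a := by linarith
      set ε : ℝ := b / (2 * (b - a)) with hε
      have hεpos : 0 < ε := by positivity
      have hε1 : ε < 1 := by
        rw [hε, div_lt_one (by positivity)]
        linarith
      have hmem := hKsconv.combo_interior_self_mem_interior hγ₀ hγ hεpos
        (by linarith : (0:ℝ) ≤ 1 - ε) (by ring)
      have hlt := hδint _ hmem
      rw [dotProduct_add, dotProduct_smul, dotProduct_smul] at hlt
      simp only [smul_eq_mul] at hlt
      have hkey : ε * (b - a) = b / 2 := by
        rw [hε]; field_simp
      nlinarith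
    have hδE : ∀ γ ∈ Ep, 0 ≤ δ ⬝ᵥ γ := by
      intro γ hγ
      by_contra hb'
      push_neg at hb'
      have ht : (0:ℝ) < (c - 1) / (δ ⬝ᵥ γ) := div_pos_of_neg_of_neg (by linarith) hb'
      have htmem : ((c - 1) / (δ ⬝ᵥ γ)) • γ ∈ Ep := by
        intro j
        rw [smul_dotProduct]
        simp only [smul_eq_mul]
        exact mul_nonpos_of_nonneg_of_nonpos ht.le (hγ j)
      have := hfE _ htmem
      rw [hfeq, dotProduct_smul] at this
      simp only [smul_eq_mul] at this
      rw [div_mul_cancel₀ _ (ne_of_lt hb')] at this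
      linarith
    have hKd : -δ ∈ K := by
      apply mem_of_dual_dual hKcone hKclosed hKconvex h0K
      intro γ hγ
      have := hδKs γ hγ
      rw [dotProduct_neg, dotProduct_comm]
      linarith
    have hEd : -δ ∈ coneGen g := by
      apply farkas_s19
      intro γ hγ
      have := hδE γ hγ
      rw [dotProduct_neg, dotProduct_comm]
      linarith
    obtain ⟨co, hco, hsum⟩ := hEd
    set y : Fin n → ℝ := fun i => co i.succ with hy
    have hdecomp : -δ = co 0 • (B *ᵥ xbar) - B *ᵥ y := by
      rw [hsum, Fin.sum_univ_succ]
      have h1 : co 0 • g 0 = co 0 • (B *ᵥ xbar) := by simp [hg]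
      have h2 : ∑ i : Fin n, co i.succ • g i.succ = -(B *ᵥ y) := by
        rw [mulVec_sum_single, ← Finset.sum_neg_distrib]
        exact Finset.sum_congr rfl fun i _ => by simp [hg, hy]
      rw [h1, h2, sub_eq_add_neg]
    have hδ0 : δ = 0 := by
      rcases eq_or_lt_of_le (hco 0) with h0c | h0c
      · have hmδ : -δ = -(B *ᵥ y) := by rw [hdecomp, ← h0c]; simp
        have hyC : B *ᵥ y ∈ {w : Fin k → ℝ | ∃ x : Fin n → ℝ, (∀ i, 0 ≤ x i) ∧ B *ᵥ x = w} :=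
          ⟨y, fun i => hco _, rfl⟩
        have hyK : B *ᵥ y ∈ -K := by
          rw [Set.mem_neg]
          rw [← hmδ]
          exact hKd
        have hy0 : B *ᵥ y ∈ ({0} : Set (Fin k → ℝ)) := by
          rw [← hU]
          exact ⟨hyC, hyK⟩
        have : B *ᵥ y = 0 := hy0
        have hδBy : δ = B *ᵥ y := neg_injective hmδ
        rw [hδBy, this]
      · set x' : Fin n → ℝ := (co 0)⁻¹ • y with hx'def
        have hx' : ∀ i, 0 ≤ x' i := fun i =>
          mul_nonneg (inv_nonneg.mpr h0c.le) (hco _)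
        have hBx' : B *ᵥ xbar - B *ᵥ x' = (co 0)⁻¹ • (-δ) := by
          rw [hdecomp, smul_sub, smul_smul, inv_mul_cancel₀ h0c.ne', one_smul, hx'def,
            Matrix.mulVec_smul]
        have hKmem : B *ᵥ xbar - B *ᵥ x' ∈ K := by
          rw [hBx']
          exact hKcone _ (inv_nonneg.mpr h0c.le) _ hKd
        have h00 := heff x' hx' hKmem
        rw [hBx'] at h00
        rcases smul_eq_zero.mp h00 with h | h
        · exact absurd h (inv_ne_zero h0c.ne')
        · exact neg_eq_zero.mp h
    have hcon := hfS γ₀ hγ₀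
    rw [hfeq, hδ0] at hcon
    rw [zero_dotProduct] at hcon
    linarith
  obtain ⟨γ, hγint, hγEp⟩ := Set.not_disjoint_iff.mp hndis
  have hγKs : γ ∈ Ks := interior_subset hγint
  have hstrict : ∀ u ∈ K, u ≠ 0 → 0 < γ ⬝ᵥ u := by
    intro u hu hne
    rcases (hγKs u hu).lt_or_eq with h | heq
    · exact h
    obtain ⟨ε, hεpos, hball⟩ := Metric.mem_nhds_iff.mp (mem_interior_iff_mem_nhds.mp hγint)
    have hun : 0 < ‖u‖ := norm_pos_iff.mpr hne
    set t : ℝ := ε / (2 * ‖u‖) with htdef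
    have ht : 0 < t := by positivity
    have hγ' : γ - t • u ∈ Metric.ball γ ε := by
      rw [Metric.mem_ball, dist_eq_norm]
      have : γ - t • u - γ = -(t • u) := by abel
      rw [this, norm_neg, norm_smul, Real.norm_eq_abs, abs_of_pos ht, htdef]
      have hq : ε / (2 * ‖u‖) * ‖u‖ = ε / 2 := by
        field_simp
      rw [hq]
      linarith
    have hmem := hball hγ' u hu
    rw [sub_dotProduct, smul_dotProduct] at hmem
    simp only [smul_eq_mul] at hmem
    have husq : 0 < u ⬝ᵥ u := by
      rcases (Finset.sum_nonneg fun i _ => mul_self_nonneg (u i)).lt_or_eq with h | h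
      · exact h
      · exact absurd (dotProduct_self_eq_zero.mp h.symm) hne
    exfalso
    linarith [mul_pos ht husq]
  have h0b : γ ⬝ᵥ (B *ᵥ xbar) ≤ 0 := by
    have := hγEp 0
    simpa [hg] using this
  have hib : ∀ i, 0 ≤ (Bᵀ *ᵥ γ) i := by
    intro i
    have := hγEp i.succ
    rw [transpose_entry]
    simp only [hg, Fin.cases_succ, dotProduct_neg] at this
    linarith
  have hscal : ∀ x : Fin n → ℝ, (∀ i, 0 ≤ x i) → γ ⬝ᵥ (B *ᵥ xbar) ≤ γ ⬝ᵥ (B *ᵥ x) := by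
    intro x hx
    have h1 : 0 ≤ (Bᵀ *ᵥ γ) ⬝ᵥ x := Finset.sum_nonneg fun i _ => mul_nonneg (hib i) (hx i)
    have h2 : γ ⬝ᵥ (B *ᵥ x) = (Bᵀ *ᵥ γ) ⬝ᵥ x := dot_mulVec B γ x
    rw [h2]
    linarith
  have hv0 : γ ⬝ᵥ (B *ᵥ xbar) = 0 := by
    apply le_antisymm h0b
    rw [dot_mulVec]
    exact Finset.sum_nonneg fun i _ => mul_nonneg (hib i) (hxbar i)
  exact ⟨γ, B *ᵥ xbar, hstrict, hscal, rfl, hv0, hib⟩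
end
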